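/- arXiv:1206.3521 — 14 statements merged into one kernel-verified Lean document; each statement's English description precedes it below -/
import Mathlib

section
/- Let X be a spectral space, Y ⊆ X, and U an ultrafilter on Y. Let K̄_{Y,U} := {X \ U | U open quasi-compact in X, Y \ U ∈ 𝒰} and K_{Y,U} := K̄_{Y,U} ∪ {U open quasi-compact | U ∩ Y ∈ 𝒰}. Then ⋂ K_{Y,U} is a singleton. -/
/-- A spectral space (Hochster's characterization): a quasi-compact T₀ space with a basis
of quasi-compact open sets closed under finite intersections, in which every nonempty
irreducible closed set has a generic point. -/
def IsSpectralSpace (X : Type*) [TopologicalSpace X] : Prop :=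
  CompactSpace X ∧ T0Space X ∧
    TopologicalSpace.IsTopologicalBasis {U : Set X | IsOpen U ∧ IsCompact U} ∧
    (∀ U V : Set X, IsOpen U → IsCompact U → IsOpen V → IsCompact V → IsCompact (U ∩ V)) ∧
    (∀ C : Set X, IsClosed C → IsIrreducible C → ∃ x : X, C = closure {x})

/-- The constructible (patch) topology on a topological space `X`: the topology generated
by the quasi-compact open sets together with their complements. -/
def constructibleTop (X : Type*) [TopologicalSpace X] : TopologicalSpace X :=
  TopologicalSpace.generateFrom
    ({U : Set X | IsOpen U ∧ IsCompact U} ∪ (compl '' {U : Set X | IsOpen U ∧ IsCompact U}))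

/-- The family `K̄_{Y,𝒰}`: complements of quasi-compact open sets `U` with `Y \ U ∈ 𝒰`. -/
def barFam {X : Type*} [TopologicalSpace X] (Y : Set X) (𝒰 : Ultrafilter Y) :
    Set (Set X) :=
  {S | ∃ U : Set X, IsOpen U ∧ IsCompact U ∧ {y : Y | (y : X) ∉ U} ∈ 𝒰 ∧ S = Uᶜ}

/-- The family `K_{Y,𝒰}`: the sets in `K̄_{Y,𝒰}` together with the quasi-compact open sets
`U` with `U ∩ Y ∈ 𝒰`. -/
def limitFam {X : Type*} [TopologicalSpace X] (Y : Set X) (𝒰 : Ultrafilter Y) :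
    Set (Set X) :=
  barFam Y 𝒰 ∪ {U : Set X | IsOpen U ∧ IsCompact U ∧ {y : Y | (y : X) ∈ U} ∈ 𝒰}

/-- In a spectral space `X`, for any `Y ⊆ X` and any ultrafilter `𝒰` on `Y`,
the intersection `⋂ K_{Y,𝒰}` is a singleton. -/
theorem limitFam_sInter_singleton {X : Type*} [TopologicalSpace X]
    (hX : IsSpectralSpace X) (Y : Set X) (𝒰 : Ultrafilter Y) :
    ∃ x : X, ⋂₀ limitFam Y 𝒰 = {x} := by
  obtain ⟨hcomp, ht0, hbasis, hqc, hgen⟩ := hX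
  haveI := hcomp
  haveI := ht0
  classical
  -- the family of quasi-compact opens whose trace on `Y` is in `𝒰`
  set 𝒱 : Set (Set X) :=
    {U : Set X | IsOpen U ∧ IsCompact U ∧ {y : Y | (y : X) ∈ U} ∈ 𝒰} with h𝒱
  have hunivV : Set.univ ∈ 𝒱 := by
    refine ⟨isOpen_univ, isCompact_univ, ?_⟩
    simp only [Set.mem_univ, Set.setOf_true]
    exact Filter.univ_mem
  have hinterV : ∀ V₁ ∈ 𝒱, ∀ V₂ ∈ 𝒱, V₁ ∩ V₂ ∈ 𝒱 := by
    rintro V₁ ⟨h1o, h1c, h1m⟩ V₂ ⟨h2o, h2c, h2m⟩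
    refine ⟨h1o.inter h2o, hqc _ _ h1o h1c h2o h2c, ?_⟩
    exact Filter.inter_mem h1m h2m
  -- the index of "bar" sets
  set I : Set (Set X) :=
    {U : Set X | IsOpen U ∧ IsCompact U ∧ {y : Y | (y : X) ∉ U} ∈ 𝒰} with hI
  set Z : Set X := ⋂₀ barFam Y 𝒰 with hZdef
  have hZ' : Z = ⋂ U : I, (↑U : Set X)ᶜ := by
    ext x
    simp only [hZdef, Set.mem_sInter, Set.mem_iInter]
    constructor
    · rintro h ⟨U, hU⟩
      exact h _ ⟨U, hU.1, hU.2.1, hU.2.2, rfl⟩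
    · rintro h S ⟨U, h1, h2, h3, rfl⟩
      exact h ⟨U, h1, h2, h3⟩
  have hZclosed : IsClosed Z := by
    rw [hZ']
    exact isClosed_iInter fun U => U.2.1.isClosed_compl
  -- Z meets every V ∈ 𝒱
  have hmeet : ∀ V ∈ 𝒱, (Z ∩ V).Nonempty := by
    rintro V ⟨hVo, hVc, hVm⟩
    rw [hZ', Set.inter_comm]
    refine hVc.inter_iInter_nonempty _ (fun U => U.2.1.isClosed_compl) ?_
    intro u
    have hmem : {y : Y | (y : X) ∈ V} ∩ ⋂ U ∈ u, {y : Y | (y : X) ∉ (U : Set X)} ∈ 𝒰 :=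
      Filter.inter_mem hVm ((Filter.biInter_finset_mem u).2 fun U _ => U.2.2.2)
    obtain ⟨y, hyV, hyU⟩ := Filter.nonempty_of_mem hmem
    refine ⟨(y : X), hyV, ?_⟩
    simp only [Set.mem_iInter] at hyU ⊢
    intro U hU
    exact hyU U hU
  -- Zorn's lemma: a minimal closed subset of Z meeting every V ∈ 𝒱
  set 𝒮 : Set (Set X) :=
    {C : Set X | IsClosed C ∧ C ⊆ Z ∧ ∀ V ∈ 𝒱, (C ∩ V).Nonempty} with h𝒮
  have hZS : Z ∈ 𝒮 := ⟨hZclosed, subset_rfl, hmeet⟩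
  obtain ⟨C, -, hCmin⟩ : ∃ m, m ⊆ Z ∧ Minimal (· ∈ 𝒮) m := by
    refine zorn_superset_nonempty 𝒮 ?_ Z hZS
    intro c hc hchain ⟨c₀, hc₀⟩
    haveI : Nonempty c := ⟨⟨c₀, hc₀⟩⟩
    refine ⟨⋂₀ c, ⟨isClosed_sInter fun s hs => (hc hs).1,
      (Set.sInter_subset_of_mem hc₀).trans (hc hc₀).2.1, ?_⟩,
      fun s hs => Set.sInter_subset_of_mem hs⟩
    rintro V hV
    have hVo := hV.1
    have hVc := hV.2.1
    have key : (V ∩ ⋂ s : c, (s : Set X)).Nonempty := by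
      refine hVc.inter_iInter_nonempty _ (fun s => (hc s.2).1) ?_
      intro u
      rcases u.eq_empty_or_nonempty with rfl | hu
      · obtain ⟨p, -, hpV⟩ := (hc hc₀).2.2 V hV
        exact ⟨p, hpV, by simp⟩
      · obtain ⟨s₀, hs₀u, hs₀min⟩ := u.exists_minimal hu
        obtain ⟨p, hpc, hpV⟩ := (hc s₀.2).2.2 V hV
        refine ⟨p, hpV, ?_⟩
        simp only [Set.mem_iInter]
        intro s hs
        rcases hchain.total s.2 s₀.2 with h | h
        · rcases lt_or_eq_of_le (h : (s : Set X) ≤ (s₀ : Set X)) with hlt | heq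
          · exact absurd (Subtype.coe_lt_coe.1 hlt) (not_lt_of_ge (hs₀min hs (Subtype.coe_lt_coe.1 hlt).le))
          · rw [show (s : Set X) = (s₀ : Set X) from heq]; exact hpc
        · exact h hpc
    obtain ⟨x, hxV, hx⟩ := key
    simp only [Set.mem_iInter] at hx
    exact ⟨x, Set.mem_sInter.2 fun s hs => hx ⟨s, hs⟩, hxV⟩
  obtain ⟨hCclosed, hCZ, hCV⟩ := hCmin.1
  have hmin : ∀ a ∈ 𝒮, a ⊆ C → a = C := fun a ha hsub =>
    Set.Subset.antisymm hsub (hCmin.2 ha hsub)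
  -- C is irreducible
  have hCne : C.Nonempty := by
    simpa using hCV Set.univ hunivV
  have hCirr : IsIrreducible C := by
    refine ⟨hCne, fun u v hu hv ⟨a, haC, hau⟩ ⟨b, hbC, hbv⟩ => ?_⟩
    by_contra hniv
    rw [Set.not_nonempty_iff_eq_empty] at hniv
    have hnotS : ∀ w : Set X, IsOpen w → (∃ p, p ∈ C ∧ p ∈ w) →
        ∃ V ∈ 𝒱, (C ∩ wᶜ) ∩ V = ∅ := by
      intro w hw ⟨p, hpC, hpw⟩
      by_contra hall
      push_neg at hall
      have hmem : C ∩ wᶜ ∈ 𝒮 :=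
        ⟨hCclosed.inter hw.isClosed_compl, Set.inter_subset_left.trans hCZ,
          fun V hV => hall V hV⟩
      have := hmin _ hmem Set.inter_subset_left
      have hp : p ∈ C ∩ wᶜ := by rw [this]; exact hpC
      exact hp.2 hpw
    obtain ⟨V₁, hV₁, hC₁⟩ := hnotS u hu ⟨a, haC, hau⟩
    obtain ⟨V₂, hV₂, hC₂⟩ := hnotS v hv ⟨b, hbC, hbv⟩
    obtain ⟨z, hzC, hzV⟩ := hCV _ (hinterV V₁ hV₁ V₂ hV₂)
    have hzu : z ∉ u ∨ z ∉ v := by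
      by_contra h
      push_neg at h
      exact absurd hniv (Set.nonempty_iff_ne_empty.1 ⟨z, hzC, h.1, h.2⟩)
    rcases hzu with h | h
    · exact absurd hC₁ (Set.nonempty_iff_ne_empty.1 ⟨z, ⟨hzC, h⟩, hzV.1⟩)
    · exact absurd hC₂ (Set.nonempty_iff_ne_empty.1 ⟨z, ⟨hzC, h⟩, hzV.2⟩)
  -- generic point of C
  obtain ⟨x, hxC⟩ := hgen C hCclosed hCirr
  have hxmem : x ∈ C := hxC ▸ subset_closure rfl
  -- x belongs to every member of limitFam
  have hxInter : x ∈ ⋂₀ limitFam Y 𝒰 := by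
    rintro S (⟨U, h1, h2, h3, rfl⟩ | hS)
    · exact Set.mem_sInter.1 (hCZ hxmem) _ ⟨U, h1, h2, h3, rfl⟩
    · obtain ⟨z, hzC, hzS⟩ := hCV S hS
      have hz : z ∈ closure ({x} : Set X) := hxC ▸ hzC
      obtain ⟨w, hwS, hwx⟩ := (mem_closure_iff.1 hz) S hS.1 hzS
      rw [Set.mem_singleton_iff] at hwx
      exact hwx ▸ hwS
  -- uniqueness
  have huniq : ∀ a b : X, a ∈ ⋂₀ limitFam Y 𝒰 → b ∈ ⋂₀ limitFam Y 𝒰 → a = b := by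
    intro a b ha hb
    by_contra hne
    have hsep : ∀ p q : X, p ∈ ⋂₀ limitFam Y 𝒰 → q ∈ ⋂₀ limitFam Y 𝒰 →
        ∀ O : Set X, IsOpen O → p ∈ O → q ∉ O → False := by
      intro p q hp hq O hO hpO hqO
      obtain ⟨U, ⟨hUo, hUc⟩, hpU, hUO⟩ := hbasis.exists_subset_of_mem_open hpO hO
      rcases 𝒰.em {y : Y | (y : X) ∈ U} with hmem | hmem
      · exact hqO (hUO (hq U (Or.inr ⟨hUo, hUc, hmem⟩)))
      · have hmem' : {y : Y | (y : X) ∉ U} ∈ 𝒰 := hmem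
        exact (hp Uᶜ (Or.inl ⟨U, hUo, hUc, hmem', rfl⟩)) hpU
    rcases exists_isOpen_xor'_mem hne with ⟨O, hO, hxor⟩
    rcases hxor with ⟨haO, hbO⟩ | ⟨hbO, haO⟩
    · exact hsep a b ha hb O hO haO hbO
    · exact hsep b a hb ha O hO hbO haO
  refine ⟨x, Set.eq_singleton_iff_unique_mem.2 ⟨hxInter, fun z hz => huniq z x hz hxInter⟩⟩
end

section
/- Let X be a spectral space, Y ⊆ X, and 𝒰 an ultrafilter on Y. Then ⋂{X \ U | U open quasi-compact, Y \ U ∈ 𝒰} is an irreducible closed subset of X whose generic point is the unique point of ⋂ K_{Y,𝒰} (the ultrafilter limit point of Y with respect to 𝒰). -/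
/-- In a spectral space `X`, for `Y ⊆ X` and an ultrafilter `𝒰` on `Y`, the set
`⋂ K̄_{Y,𝒰}` is an irreducible closed subset of `X` whose generic point is the unique
point of `⋂ K_{Y,𝒰}` (the ultrafilter limit point of `Y` with respect to `𝒰`). -/
theorem barFam_sInter_irreducible_closed {X : Type*} [TopologicalSpace X]
    (hX : IsSpectralSpace X) (Y : Set X) (𝒰 : Ultrafilter Y) :
    IsClosed (⋂₀ barFam Y 𝒰) ∧ IsIrreducible (⋂₀ barFam Y 𝒰) ∧
      ∃ x : X, ⋂₀ limitFam Y 𝒰 = {x} ∧ ⋂₀ barFam Y 𝒰 = closure {x} := by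
  obtain ⟨hcomp, ht0, hbasis, hinter, hgen⟩ := hX
  haveI := hcomp; haveI := ht0
  set Z := ⋂₀ barFam Y 𝒰 with hZdef
  -- basic facts about members of barFam
  have hmem : ∀ S ∈ barFam Y 𝒰, IsClosed S ∧ {y : Y | (y : X) ∈ S} ∈ 𝒰 := by
    rintro S ⟨U, hUo, hUc, hU𝒰, rfl⟩
    exact ⟨hUo.isClosed_compl, hU𝒰⟩
  have hclosed : IsClosed Z := by
    refine isClosed_sInter fun S hS => (hmem S hS).1
  -- key lemma
  have keyA : ∀ W : Set X, IsOpen W → IsCompact W → {y : Y | (y : X) ∈ W} ∈ 𝒰 →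
      (Z ∩ W).Nonempty := by
    intro W hWo hWc hW𝒰
    by_contra h
    rw [Set.not_nonempty_iff_eq_empty] at h
    have h' : (W ∩ ⋂ S : barFam Y 𝒰, (S : Set X)) = ∅ := by
      rw [Set.inter_comm] at h
      rw [hZdef, Set.sInter_eq_iInter] at h
      simpa using h
    obtain ⟨u, hu⟩ := hWc.elim_finite_subfamily_closed
      (fun S : barFam Y 𝒰 => (S : Set X)) (fun S => (hmem S S.2).1) h'
    -- W ⊆ ⋃ i ∈ u, (↑i)ᶜ
    have hsub : W ⊆ ⋃ i ∈ u, ((i : Set X))ᶜ := by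
      intro w hw
      by_contra hwn
      simp only [Set.mem_iUnion, Set.mem_compl_iff, not_exists, not_not] at hwn
      have : w ∈ W ∩ ⋂ i ∈ u, (i : Set X) := ⟨hw, Set.mem_iInter₂.mpr hwn⟩
      rw [hu] at this
      exact this
    have hYsub : {y : Y | (y : X) ∈ W} ⊆ ⋃ i ∈ (↑u : Set ↥(barFam Y 𝒰)), {y : Y | (y : X) ∈ ((i : Set X))ᶜ} := by
      intro y hy
      obtain ⟨_, ⟨i, rfl⟩, _, ⟨hi, rfl⟩, hyi⟩ := hsub hy
      exact Set.mem_biUnion hi hyi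
    have hU : (⋃ i ∈ (↑u : Set ↥(barFam Y 𝒰)), {y : Y | (y : X) ∈ ((i : Set X))ᶜ}) ∈ 𝒰 :=
      𝒰.toFilter.sets_of_superset hW𝒰 hYsub
    obtain ⟨i, _, hi⟩ := (Ultrafilter.finite_biUnion_mem_iff u.finite_toSet).mp hU
    have hcompl : {y : Y | (y : X) ∈ ((i : Set X))ᶜ} = {y : Y | (y : X) ∈ (i : Set X)}ᶜ := by
      ext y; simp
    rw [hcompl, Ultrafilter.compl_mem_iff_notMem] at hi
    exact hi (hmem ↑i i.2).2
  have hZne : Z.Nonempty := by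
    have := keyA Set.univ isOpen_univ isCompact_univ (by simp only [Set.mem_univ, Set.setOf_true]; exact Filter.univ_mem)
    simpa using this
  -- open qc sets meeting Z are 𝒰-big
  have hbig : ∀ W : Set X, IsOpen W → IsCompact W → (Z ∩ W).Nonempty →
      {y : Y | (y : X) ∈ W} ∈ 𝒰 := by
    intro W hWo hWc ⟨z, hzZ, hzW⟩
    by_contra h
    rw [← Ultrafilter.compl_mem_iff_notMem] at h
    have : {y : Y | (y : X) ∈ W}ᶜ = {y : Y | (y : X) ∉ W} := by ext y; simp
    rw [this] at h
    have hZW : Z ⊆ Wᶜ := Set.sInter_subset_of_mem ⟨W, hWo, hWc, h, rfl⟩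
    exact hZW hzZ hzW
  have hirr : IsIrreducible Z := by
    refine ⟨hZne, fun V₁ V₂ hV₁ hV₂ h₁ h₂ => ?_⟩
    obtain ⟨z₁, hz₁Z, hz₁V⟩ := h₁
    obtain ⟨z₂, hz₂Z, hz₂V⟩ := h₂
    obtain ⟨W₁, ⟨hW₁o, hW₁c⟩, hz₁W, hW₁V⟩ := hbasis.exists_subset_of_mem_open hz₁V hV₁
    obtain ⟨W₂, ⟨hW₂o, hW₂c⟩, hz₂W, hW₂V⟩ := hbasis.exists_subset_of_mem_open hz₂V hV₂
    have h₁𝒰 := hbig W₁ hW₁o hW₁c ⟨z₁, hz₁Z, hz₁W⟩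
    have h₂𝒰 := hbig W₂ hW₂o hW₂c ⟨z₂, hz₂Z, hz₂W⟩
    have hW𝒰 : {y : Y | (y : X) ∈ W₁ ∩ W₂} ∈ 𝒰 := Filter.inter_mem h₁𝒰 h₂𝒰
    obtain ⟨z, hzZ, hzW⟩ := keyA (W₁ ∩ W₂) (hW₁o.inter hW₂o)
      (hinter W₁ W₂ hW₁o hW₁c hW₂o hW₂c) hW𝒰
    exact ⟨z, hzZ, hW₁V hzW.1, hW₂V hzW.2⟩
  obtain ⟨x, hx⟩ := hgen Z hclosed hirr
  have hxZ : x ∈ Z := hx ▸ subset_closure rfl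
  -- x is in every open qc set that is 𝒰-big
  have hxU : ∀ U : Set X, IsOpen U → IsCompact U → {y : Y | (y : X) ∈ U} ∈ 𝒰 → x ∈ U := by
    intro U hUo hUc hU𝒰
    obtain ⟨z, hzZ, hzU⟩ := keyA U hUo hUc hU𝒰
    rw [hx] at hzZ
    obtain ⟨w, hwU, hwx⟩ := mem_closure_iff.mp hzZ U hUo hzU
    rwa [Set.mem_singleton_iff.mp hwx] at hwU
  refine ⟨hclosed, hirr, x, ?_, hx⟩
  rw [Set.eq_singleton_iff_unique_mem]
  constructor
  · rintro S (hS | ⟨hSo, hSc, hS𝒰⟩)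
    · exact Set.sInter_subset_of_mem hS hxZ
    · exact hxU S hSo hSc hS𝒰
  · intro x' hx'
    have hiff : ∀ U : Set X, IsOpen U → IsCompact U → (x' ∈ U ↔ x ∈ U) := by
      intro U hUo hUc
      rcases 𝒰.mem_or_compl_mem {y : Y | (y : X) ∈ U} with h | h
      · constructor
        · intro _; exact hxU U hUo hUc h
        · intro _; exact hx' U (Or.inr ⟨hUo, hUc, h⟩)
      · have h' : {y : Y | (y : X) ∉ U} ∈ 𝒰 := h
        have hmemU : Uᶜ ∈ barFam Y 𝒰 := ⟨U, hUo, hUc, h', rfl⟩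
        have hx'U : x' ∉ U := hx' Uᶜ (Or.inl hmemU)
        have hxU' : x ∉ U := Set.sInter_subset_of_mem hmemU hxZ
        simp [hx'U, hxU']
    have : Inseparable x' x := by
      rw [inseparable_iff_forall_isOpen]
      intro V hV
      constructor
      · intro hxV
        obtain ⟨W, ⟨hWo, hWc⟩, hxW, hWV⟩ := hbasis.exists_subset_of_mem_open hxV hV
        exact hWV ((hiff W hWo hWc).mp hxW)
      · intro hxV
        obtain ⟨W, ⟨hWo, hWc⟩, hxW, hWV⟩ := hbasis.exists_subset_of_mem_open hxV hV
        exact hWV ((hiff W hWo hWc).mpr hxW)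
    exact this.eq
end

section
/- Let X be a spectral space and Y ⊆ X. The closure of Y in the constructible (patch) topology on X equals the set of all ultrafilter limit points x_{Y,𝒰} as 𝒰 ranges over all ultrafilters on Y. -/
/-- In a spectral space `X`, the closure of `Y ⊆ X` in the constructible topology is
the set of all ultrafilter limit points of `Y`, as `𝒰` ranges over all ultrafilters
on `Y`. -/
theorem closure_cons_eq_ultrafilter_limits {X : Type*} [TopologicalSpace X]
    (hX : IsSpectralSpace X) (Y : Set X) :
    @closure X (constructibleTop X) Y =
      {x : X | ∃ 𝒰 : Ultrafilter Y, ⋂₀ limitFam Y 𝒰 = {x}} := by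
  obtain ⟨-, hT0, hBasis, -, -⟩ := hX
  haveI := hT0
  set g : Set (Set X) :=
    {U : Set X | IsOpen U ∧ IsCompact U} ∪ (compl '' {U : Set X | IsOpen U ∧ IsCompact U}) with hg
  ext x
  rw [Set.mem_setOf_eq, @mem_closure_iff_ultrafilter X x Y (constructibleTop X)]
  have hnhds : ∀ F : Ultrafilter X,
      (↑F ≤ @nhds X (constructibleTop X) x) ↔ ∀ s ∈ g, x ∈ s → s ∈ F := by
    intro F
    rw [show constructibleTop X = TopologicalSpace.generateFrom g from rfl,
      TopologicalSpace.nhds_generateFrom]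
    simp only [le_iInf_iff, Filter.le_principal_iff, Set.mem_setOf_eq]
    constructor
    · intro h s hs hxs; exact h s ⟨hxs, hs⟩
    · intro h s hs; exact h s hs.2 hs.1
  constructor
  · rintro ⟨F, hYF, hFx⟩
    have hrange : Set.range ((↑) : Y → X) ∈ F := by rwa [Subtype.range_coe]
    set 𝒰 : Ultrafilter Y := F.comap Subtype.val_injective hrange with h𝒰
    have hmem : ∀ S : Set X, {y : Y | (y : X) ∈ S} ∈ 𝒰 → S ∈ F := by
      intro S hS
      rw [h𝒰, Ultrafilter.mem_comap] at hS
      have : ((↑) : Y → X) '' {y : Y | (y : X) ∈ S} = Y ∩ S := by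
        rw [show {y : Y | (y : X) ∈ S} = ((↑) : Y → X) ⁻¹' S from rfl,
          Subtype.image_preimage_coe]
      rw [this] at hS
      exact Filter.mem_of_superset hS Set.inter_subset_right
    have hgen : ∀ s ∈ g, x ∈ s → s ∈ F := (hnhds F).1 hFx
    have hxmem : ∀ S ∈ limitFam Y 𝒰, x ∈ S := by
      rintro S (⟨U, hUo, hUc, hU𝒰, rfl⟩ | ⟨hUo, hUc, hU𝒰⟩)
      · by_contra hx
        have hUF : U ∈ F := hgen U (Or.inl ⟨hUo, hUc⟩) (not_not.mp hx)
        have hUcF : Uᶜ ∈ F := hmem Uᶜ hU𝒰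
        exact Filter.empty_notMem (F : Filter X)
          (by simpa using F.toFilter.inter_mem hUF hUcF)
      · by_contra hx
        have hUcF : Sᶜ ∈ F := hgen Sᶜ (Or.inr ⟨S, ⟨hUo, hUc⟩, rfl⟩) hx
        have hUF : S ∈ F := hmem S hU𝒰
        exact Filter.empty_notMem (F : Filter X)
          (by simpa using F.toFilter.inter_mem hUF hUcF)
    refine ⟨𝒰, ?_⟩
    ext x'
    simp only [Set.mem_sInter, Set.mem_singleton_iff]
    constructor
    · intro hx'
      refine (Inseparable.eq ?_).symm
      rw [inseparable_iff_forall_isOpen]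
      intro V hV
      constructor
      · intro hxV
        obtain ⟨U, ⟨hUo, hUc⟩, hxU, hUV⟩ := hBasis.exists_subset_of_mem_open hxV hV
        rcases 𝒰.mem_or_compl_mem {y : Y | (y : X) ∈ U} with h | h
        · exact hUV (hx' U (Or.inr ⟨hUo, hUc, h⟩))
        · exact absurd hxU (hxmem Uᶜ (Or.inl ⟨U, hUo, hUc, h, rfl⟩))
      · intro hx'V
        obtain ⟨U, ⟨hUo, hUc⟩, hxU, hUV⟩ := hBasis.exists_subset_of_mem_open hx'V hV
        rcases 𝒰.mem_or_compl_mem {y : Y | (y : X) ∈ U} with h | h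
        · exact hUV (hxmem U (Or.inr ⟨hUo, hUc, h⟩))
        · exact absurd hxU (hx' Uᶜ (Or.inl ⟨U, hUo, hUc, h, rfl⟩))
    · rintro rfl; exact hxmem
  · rintro ⟨𝒰, h𝒰⟩
    have hxmem : ∀ S ∈ limitFam Y 𝒰, x ∈ S := by
      intro S hS
      have : x ∈ ⋂₀ limitFam Y 𝒰 := h𝒰 ▸ rfl
      exact this S hS
    refine ⟨Ultrafilter.map Subtype.val 𝒰, ?_, ?_⟩
    · rw [Ultrafilter.mem_map]
      exact Filter.univ_mem' fun y => y.2
    · rw [hnhds]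
      rintro s (⟨hUo, hUc⟩ | ⟨U, ⟨hUo, hUc⟩, rfl⟩) hxs
      · rw [Ultrafilter.mem_map]
        rcases 𝒰.mem_or_compl_mem {y : Y | (y : X) ∈ s} with h | h
        · exact h
        · exact absurd hxs (hxmem sᶜ (Or.inl ⟨s, hUo, hUc, h, rfl⟩))
      · rw [Ultrafilter.mem_map]
        rcases 𝒰.mem_or_compl_mem {y : Y | (y : X) ∈ U} with h | h
        · exact absurd (hxmem U (Or.inr ⟨hUo, hUc, h⟩)) hxs
        · exact h
end

section
/- Let R be a commutative ring, Y a subset of Spec(R), and 𝒰 an ultrafilter on Y. Then P_{Y,𝒰} := {a ∈ R | V(a) ∩ Y ∈ 𝒰} is a prime ideal of R, where V(a) = {P ∈ Spec(R) | a ∈ P}. -/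
/-- Let `R` be a commutative ring, `Y ⊆ Spec(R)` and `𝒰` an ultrafilter on `Y`. Then
`P_{Y,𝒰} := {a ∈ R | V(a) ∩ Y ∈ 𝒰}` is a prime ideal of `R`, where
`V(a)` is the set of primes containing `a`. -/
theorem ultrafilter_limit_prime {R : Type*} [CommRing R]
    (Y : Set (PrimeSpectrum R)) (𝒰 : Ultrafilter Y) :
    ∃ P : Ideal R, P.IsPrime ∧
      (P : Set R) = {a : R | {y : Y | a ∈ (y : PrimeSpectrum R).asIdeal} ∈ 𝒰} := by
  refine ⟨{ carrier := {a : R | {y : Y | a ∈ (y : PrimeSpectrum R).asIdeal} ∈ 𝒰}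
            zero_mem' := by
              simp only [Set.mem_setOf_eq, Submodule.zero_mem]
              exact Filter.univ_mem' fun y => trivial
            add_mem' := fun {a b} ha hb => by
              refine Filter.mem_of_superset (Filter.inter_mem ha hb) ?_
              rintro y ⟨h1, h2⟩
              exact Ideal.add_mem _ h1 h2
            smul_mem' := fun c a ha => by
              refine Filter.mem_of_superset ha fun y h => ?_
              exact Ideal.mul_mem_left _ c h }, ?_, rfl⟩
  constructor
  · intro h
    have h1 : (1 : R) ∈ {a : R | {y : Y | a ∈ (y : PrimeSpectrum R).asIdeal} ∈ 𝒰} := by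
      have := h ▸ (Submodule.mem_top : (1:R) ∈ (⊤ : Ideal R)); exact this
    have : {y : Y | (1:R) ∈ (y : PrimeSpectrum R).asIdeal} = ∅ := by
      ext y
      simp [(y : PrimeSpectrum R).isPrime.ne_top, Ideal.eq_top_iff_one]
      exact fun hy => (y : PrimeSpectrum R).isPrime.ne_top (Ideal.eq_top_iff_one _ |>.2 hy)
    exact 𝒰.empty_notMem (this ▸ h1)
  · intro a b hab
    have : {y : Y | a * b ∈ (y : PrimeSpectrum R).asIdeal} ⊆
        {y : Y | a ∈ (y : PrimeSpectrum R).asIdeal} ∪ {y : Y | b ∈ (y : PrimeSpectrum R).asIdeal} := by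
      intro y hy
      exact (y : PrimeSpectrum R).isPrime.mem_or_mem hy
    have := Filter.mem_of_superset hab this
    exact (Ultrafilter.union_mem_iff.1 this)
end

section
/- Let R be a commutative ring, Y ⊆ Spec(R), and 𝒰 an ultrafilter on Y. A prime ideal P of R lies in the constructible (patch) closure of Y if and only if P = P_{Y,𝒰} := {a ∈ R | V(a) ∩ Y ∈ 𝒰} for some ultrafilter 𝒰 on Y. -/
lemma constructibleTop_mem_nhds {X : Type*} (t : TopologicalSpace X) {s : Set X} {x : X}
    (h : @IsOpen X t s) (hx : x ∈ s) : s ∈ @nhds X t x := by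
  letI := t
  exact h.mem_nhds hx

open PrimeSpectrum Set Filter in
/-- For `R` a commutative ring and `Y ⊆ Spec(R)`, a prime `P` lies in the constructible
(patch) closure of `Y` if and only if `P = P_{Y,𝒰} = {a ∈ R | V(a) ∩ Y ∈ 𝒰}` for some
ultrafilter `𝒰` on `Y`. -/
theorem mem_closure_cons_iff_ultrafilter {R : Type*} [CommRing R]
    (Y : Set (PrimeSpectrum R)) (P : PrimeSpectrum R) :
    P ∈ @closure (PrimeSpectrum R) (constructibleTop (PrimeSpectrum R)) Y ↔
      ∃ 𝒰 : Ultrafilter Y,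
        (P.asIdeal : Set R) = {a : R | {y : Y | a ∈ (y : PrimeSpectrum R).asIdeal} ∈ 𝒰} := by
  set G : Set (Set (PrimeSpectrum R)) :=
    {U : Set (PrimeSpectrum R) | IsOpen U ∧ IsCompact U} ∪
      (compl '' {U : Set (PrimeSpectrum R) | IsOpen U ∧ IsCompact U}) with hG
  have hτ : constructibleTop (PrimeSpectrum R) = TopologicalSpace.generateFrom G := rfl
  have hbasic : ∀ a : R, (zeroLocus {a})ᶜ ∈ G ∧ zeroLocus ({a} : Set R) ∈ G := by
    intro a
    have h1 : (zeroLocus ({a} : Set R))ᶜ ∈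
        {U : Set (PrimeSpectrum R) | IsOpen U ∧ IsCompact U} := by
      refine ⟨(isClosed_zeroLocus _).isOpen_compl, ?_⟩
      simpa [basicOpen_eq_zeroLocus_compl] using isCompact_basicOpen a
    exact ⟨Or.inl h1, Or.inr ⟨_, h1, compl_compl _⟩⟩
  have hopenG : ∀ S ∈ G, @IsOpen _ (constructibleTop (PrimeSpectrum R)) S := by
    intro S hS
    exact TopologicalSpace.isOpen_generateFrom_of_mem hS
  constructor
  · intro hP
    rw [@mem_closure_iff_ultrafilter _ P Y (constructibleTop (PrimeSpectrum R))] at hP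
    obtain ⟨u, hYu, hu⟩ := hP
    have hrange : Set.range (Subtype.val : Y → PrimeSpectrum R) ∈ u := by
      rwa [Subtype.range_coe]
    refine ⟨u.comap Subtype.val_injective hrange, ?_⟩
    have key : ∀ a : R, zeroLocus ({a} : Set R) ∈ u ↔ a ∈ P.asIdeal := by
      intro a
      constructor
      · intro h
        by_contra ha
        have : (zeroLocus ({a} : Set R))ᶜ ∈ u :=
          hu (constructibleTop_mem_nhds _ (hopenG _ (hbasic a).1)
            (by simpa [mem_zeroLocus] using ha))
        exact (Ultrafilter.compl_notMem_iff.mpr h) this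
      · intro ha
        exact hu (constructibleTop_mem_nhds _ (hopenG _ (hbasic a).2)
          (by simpa [mem_zeroLocus] using ha))
    ext a
    have hpre : {y : Y | a ∈ (y : PrimeSpectrum R).asIdeal} =
        (Subtype.val : Y → PrimeSpectrum R) ⁻¹' zeroLocus ({a} : Set R) := by
      ext y; simp [mem_zeroLocus]
    rw [Set.mem_setOf_eq, hpre, Ultrafilter.mem_comap]
    have himg : (Subtype.val : Y → PrimeSpectrum R) ''
        ((Subtype.val : Y → PrimeSpectrum R) ⁻¹' zeroLocus ({a} : Set R)) =
        zeroLocus ({a} : Set R) ∩ Y := by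
      rw [Set.image_preimage_eq_inter_range, Subtype.range_coe]
    rw [himg]
    constructor
    · intro ha
      exact Filter.inter_mem ((key a).mpr ha) hYu
    · intro h
      exact (key a).mp (mem_of_superset h inter_subset_left)
  · rintro ⟨𝒰, h𝒰⟩
    rw [@mem_closure_iff_ultrafilter _ P Y (constructibleTop (PrimeSpectrum R))]
    refine ⟨𝒰.map Subtype.val, ?_, ?_⟩
    · have hYpre : (Subtype.val : Y → PrimeSpectrum R) ⁻¹' Y = Set.univ := by
        ext y; simp
      exact Ultrafilter.mem_coe.mpr (Ultrafilter.mem_map.mpr (hYpre ▸ Filter.univ_mem))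
    · show (𝒰.map Subtype.val : Filter (PrimeSpectrum R)) ≤ @nhds _ (constructibleTop (PrimeSpectrum R)) P
      rw [hτ, show @nhds _ (TopologicalSpace.generateFrom G) P = _ from
        TopologicalSpace.nhds_generateFrom (g := G) (a := P)]
      refine le_iInf₂ fun S hS => ?_
      rw [Filter.le_principal_iff]
      obtain ⟨hPS, hSG⟩ := hS
      rw [Ultrafilter.mem_coe, Ultrafilter.mem_map]
      have hmem : ∀ a : R, a ∈ P.asIdeal ↔
          {y : Y | a ∈ (y : PrimeSpectrum R).asIdeal} ∈ 𝒰 := by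
        intro a
        rw [← SetLike.mem_coe, h𝒰]
        exact Iff.rfl
      rcases hSG with hS1 | ⟨U, hU, rfl⟩
      · -- S compact open
        obtain ⟨t, ht⟩ := isCompact_isOpen_iff.mp ⟨hS1.2, hS1.1⟩
        have : ∃ f ∈ t, f ∉ P.asIdeal := by
          by_contra hc
          push_neg at hc
          exact (ht ▸ hPS) ((mem_zeroLocus _ _).mpr fun f hf => hc f hf)
        obtain ⟨f, hft, hfP⟩ := this
        have hcompl : {y : Y | f ∈ (y : PrimeSpectrum R).asIdeal}ᶜ ∈ 𝒰 :=
          Ultrafilter.compl_mem_iff_notMem.mpr (fun h => hfP ((hmem f).mpr h))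
        refine mem_of_superset hcompl ?_
        intro y hy
        rw [Set.mem_preimage, ← ht]
        intro hzl
        exact hy ((mem_zeroLocus _ _).mp hzl hft)
      · -- S = Uᶜ, U compact open
        obtain ⟨t, ht⟩ := isCompact_isOpen_iff.mp ⟨hU.2, hU.1⟩
        rw [← ht, compl_compl] at hPS ⊢
        have hall := fun (f : R) (hf : f ∈ t) => (hmem f).mp ((mem_zeroLocus _ _).mp hPS hf)
        have hint : (⋂ f ∈ t, {y : Y | f ∈ (y : PrimeSpectrum R).asIdeal}) ∈ 𝒰 :=
          (Filter.biInter_mem t.finite_toSet).mpr hall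
        refine mem_of_superset hint ?_
        intro y hy
        rw [Set.mem_iInter₂] at hy
        exact (mem_zeroLocus _ _).mpr fun f hf => hy f hf
end

section
/- Let X be a spectral space and Y a quasi-compact subspace of X (with respect to the spectral topology). Then the generic closure Y^gen := {x ∈ X | x ⤳ y for some y ∈ Y} (equivalently {x | some y ∈ Y lies in the closure of {x}}) is closed in the constructible topology on X. -/
/-- In a spectral space `X`, the generic closure
`Y^gen = {x | some y ∈ Y lies in the closure of {x}}` of a quasi-compact subset `Y`
is closed in the constructible topology. -/
theorem genericClosure_isClosed_cons {X : Type*} [TopologicalSpace X]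
    (hX : IsSpectralSpace X) (Y : Set X) (hY : IsCompact Y) :
    @IsClosed X (constructibleTop X) {x : X | ∃ y ∈ Y, y ∈ closure {x}} := by
  obtain ⟨-, -, hB, -, -⟩ := hX
  have key : {x : X | ∃ y ∈ Y, y ∈ closure {x}} =
      ⋂₀ {U : Set X | (IsOpen U ∧ IsCompact U) ∧ Y ⊆ U} := by
    ext x
    constructor
    · rintro ⟨y, hyY, hyc⟩ U ⟨⟨hUo, -⟩, hYU⟩
      rcases mem_closure_iff.1 hyc U hUo (hYU hyY) with ⟨z, hzU, rfl⟩
      exact hzU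
    · intro hx
      by_contra hne
      have hsub : Y ⊆ (closure {x})ᶜ := fun y hy hyc => hne ⟨y, hy, hyc⟩
      -- choose basic qc open neighborhoods inside the complement
      have hchoice : ∀ y : Y, ∃ V : Set X, (IsOpen V ∧ IsCompact V) ∧
          (y : X) ∈ V ∧ V ⊆ (closure {x})ᶜ := by
        intro y
        obtain ⟨V, hVmem, hyV, hVsub⟩ :=
          hB.exists_subset_of_mem_open (hsub y.2) (isClosed_closure.isOpen_compl)
        exact ⟨V, hVmem, hyV, hVsub⟩
      choose V hV hyV hVsub using hchoice
      obtain ⟨t, ht⟩ := hY.elim_finite_subcover V (fun y => (hV y).1)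
        (fun z hz => Set.mem_iUnion.2 ⟨⟨z, hz⟩, hyV ⟨z, hz⟩⟩)
      set U : Set X := ⋃ y ∈ t, V y with hU
      have hUopen : IsOpen U := isOpen_biUnion fun y _ => (hV y).1
      have hUcomp : IsCompact U := t.finite_toSet.isCompact_biUnion fun y _ => (hV y).2
      have hYU : Y ⊆ U := ht
      have hxU : x ∈ U := hx U ⟨⟨hUopen, hUcomp⟩, hYU⟩
      rcases Set.mem_iUnion₂.1 hxU with ⟨y, -, hxy⟩
      exact hVsub y hxy (subset_closure rfl)
  rw [key]
  refine @isClosed_sInter X (constructibleTop X) _ ?_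
  rintro U ⟨⟨hUo, hUc⟩, -⟩
  refine @IsClosed.mk X (constructibleTop X) U ?_
  exact TopologicalSpace.isOpen_generateFrom_of_mem
    (Set.mem_union_right _ ⟨U, ⟨hUo, hUc⟩, rfl⟩)
end

section
/- Let X be a spectral space and Y ⊆ X. Then the closure of Y in the spectral topology equals the specialization closure of the constructible closure of Y, i.e., Cl(Y) = (Cl^cons(Y))^sp. -/
open TopologicalSpace Filter Set Topology

/-- Closure with respect to an explicit topology is the least closed superset. -/
theorem closure_subset_of_isClosed_aux {X : Type*} (t : TopologicalSpace X) {Y C : Set X}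
    (hYC : Y ⊆ C) (hC : @IsClosed X t C) : @closure X t Y ⊆ C := by
  letI := t
  exact closure_minimal hYC hC

/-- `IsClosed` w.r.t. an explicit topology from openness of the complement. -/
theorem isClosed_of_topology_aux {X : Type*} (t : TopologicalSpace X) {s : Set X}
    (h : t.IsOpen sᶜ) : @IsClosed X t s := by
  letI := t
  exact isOpen_compl_iff.1 h

/-- Membership in closure w.r.t. an explicit topology via cluster points. -/
theorem mem_closure_aux {X : Type*} (t : TopologicalSpace X) {Y : Set X} {y : X}
    (h : (@nhds X t y ⊓ 𝓟 Y).NeBot) : y ∈ @closure X t Y := by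
  letI := t
  exact mem_closure_iff_clusterPt.2 h

/-- Auxiliary: in a spectral space, every ultrafilter has a "patch limit": a point `y`
such that `y ∈ U ↔ U ∈ 𝒢` for every quasi-compact open `U`. -/
theorem exists_patch_limit {X : Type*} [TopologicalSpace X]
    (hcomp : CompactSpace X)
    (hbasis : TopologicalSpace.IsTopologicalBasis {U : Set X | IsOpen U ∧ IsCompact U})
    (hinter : ∀ U V : Set X, IsOpen U → IsCompact U → IsOpen V → IsCompact V →
      IsCompact (U ∩ V))
    (hgen : ∀ C : Set X, IsClosed C → IsIrreducible C → ∃ x : X, C = closure {x})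
    (𝒢 : Ultrafilter X) :
    ∃ y : X, ∀ U : Set X, IsOpen U → IsCompact U → (y ∈ U ↔ U ∈ 𝒢) := by
  set ι := {U : Set X // IsOpen U ∧ IsCompact U ∧ U ∉ 𝒢} with hι
  set C : Set X := ⋂ i : ι, (i : Set X)ᶜ with hC
  have hCclosed : IsClosed C := isClosed_iInter fun i => (i.2.1).isClosed_compl
  -- Claim A
  have claimA : ∀ W : Set X, IsOpen W → IsCompact W → W ∈ 𝒢 → (W ∩ C).Nonempty := by
    intro W hWo hWc hW𝒢
    refine hWc.inter_iInter_nonempty _ (fun i => (i.2.1).isClosed_compl) ?_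
    intro u
    have hmem : W ∩ ⋂ i ∈ u, ((i : Set X)ᶜ) ∈ 𝒢 := by
      refine inter_mem hW𝒢 ?_
      refine (Filter.biInter_mem u.finite_toSet).2 fun i _ => ?_
      exact Ultrafilter.compl_mem_iff_notMem.2 i.2.2.2
    exact Filter.nonempty_of_mem hmem
  have hCne : C.Nonempty := by
    have := claimA univ isOpen_univ isCompact_univ univ_mem
    simpa using this
  -- If a qc open meets C then it is in 𝒢
  have hmeet : ∀ U : Set X, IsOpen U → IsCompact U → (U ∩ C).Nonempty → U ∈ 𝒢 := by
    intro U hUo hUc ⟨z, hzU, hzC⟩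
    by_contra hU
    exact (mem_iInter.1 hzC ⟨U, hUo, hUc, hU⟩) hzU
  have hirr : IsIrreducible C := by
    refine ⟨hCne, fun u v huo hvo ⟨z₁, hz₁C, hz₁u⟩ ⟨z₂, hz₂C, hz₂v⟩ => ?_⟩
    obtain ⟨U₁, ⟨hU₁o, hU₁c⟩, hz₁U₁, hU₁u⟩ := hbasis.exists_subset_of_mem_open hz₁u huo
    obtain ⟨U₂, ⟨hU₂o, hU₂c⟩, hz₂U₂, hU₂v⟩ := hbasis.exists_subset_of_mem_open hz₂v hvo
    have h₁ : U₁ ∈ 𝒢 := hmeet U₁ hU₁o hU₁c ⟨z₁, hz₁U₁, hz₁C⟩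
    have h₂ : U₂ ∈ 𝒢 := hmeet U₂ hU₂o hU₂c ⟨z₂, hz₂U₂, hz₂C⟩
    obtain ⟨z, hzW, hzC⟩ := claimA (U₁ ∩ U₂) (hU₁o.inter hU₂o)
      (hinter _ _ hU₁o hU₁c hU₂o hU₂c) (inter_mem h₁ h₂)
    exact ⟨z, hzC, hU₁u hzW.1, hU₂v hzW.2⟩
  obtain ⟨y, hy⟩ := hgen C hCclosed hirr
  have hyC : y ∈ C := hy ▸ subset_closure rfl
  refine ⟨y, fun U hUo hUc => ?_⟩
  constructor
  · intro hyU
    exact hmeet U hUo hUc ⟨y, hyU, hyC⟩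
  · intro hU𝒢
    obtain ⟨z, hzU, hzC⟩ := claimA U hUo hUc hU𝒢
    rw [hy] at hzC
    rcases mem_closure_iff.1 hzC U hUo hzU with ⟨w, hwU, hw⟩
    rwa [mem_singleton_iff.1 hw] at hwU

/-- In a spectral space `X`, the closure of `Y` in the spectral topology is the
specialization closure of the closure of `Y` in the constructible topology:
`Cl(Y) = (Cl^cons(Y))^sp`. -/
theorem closure_eq_sp_of_cons_closure {X : Type*} [TopologicalSpace X]
    (hX : IsSpectralSpace X) (Y : Set X) :
    closure Y = {x : X | ∃ y ∈ @closure X (constructibleTop X) Y, x ∈ closure {y}} := by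
  obtain ⟨hcomp, ht0, hbasis, hinter, hgen⟩ := hX
  -- every open set is constructible-open
  have hopen : ∀ s : Set X, IsOpen s → (constructibleTop X).IsOpen s := by
    intro s hs
    obtain ⟨S, hS, rfl⟩ := hbasis.open_eq_sUnion hs
    show TopologicalSpace.GenerateOpen _ (⋃₀ S)
    exact TopologicalSpace.GenerateOpen.sUnion S fun t ht =>
      TopologicalSpace.GenerateOpen.basic t (Or.inl (hS ht))
  have hconsSub : @closure X (constructibleTop X) Y ⊆ closure Y :=
    closure_subset_of_isClosed_aux (constructibleTop X) subset_closure
      (isClosed_of_topology_aux (constructibleTop X) (hopen _ isClosed_closure.isOpen_compl))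
  ext x
  simp only [mem_setOf_eq]
  constructor
  · intro hx
    have hne : (𝓝 x ⊓ 𝓟 Y).NeBot := mem_closure_iff_clusterPt.1 hx
    obtain ⟨𝒢, h𝒢⟩ := Filter.exists_ultrafilter_le (𝓝 x ⊓ 𝓟 Y)
    obtain ⟨y, hy⟩ := exists_patch_limit hcomp hbasis hinter hgen 𝒢
    have hYmem : Y ∈ 𝒢 := h𝒢 (Filter.mem_inf_of_right (mem_principal_self Y))
    have hnhds : (𝒢 : Filter X) ≤ @nhds X (constructibleTop X) y := by
      rw [constructibleTop, TopologicalSpace.nhds_generateFrom]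
      refine le_iInf₂ fun s hs => ?_
      rw [Filter.le_principal_iff]
      rcases hs.2 with hqc | ⟨U, hU, rfl⟩
      · exact (hy s hqc.1 hqc.2).1 hs.1
      · exact Ultrafilter.compl_mem_iff_notMem.2 fun h => hs.1 ((hy U hU.1 hU.2).2 h)
    refine ⟨y, ?_, ?_⟩
    · have : (@nhds X (constructibleTop X) y ⊓ 𝓟 Y).NeBot :=
        Filter.neBot_of_le (le_inf hnhds (le_principal_iff.2 hYmem))
      exact mem_closure_aux (constructibleTop X) this
    · rw [mem_closure_iff]
      intro o ho hxo
      obtain ⟨U, ⟨hUo, hUc⟩, hxU, hUo'⟩ := hbasis.exists_subset_of_mem_open hxo ho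
      have hU𝒢 : U ∈ 𝒢 := h𝒢 (Filter.mem_inf_of_left (hUo.mem_nhds hxU))
      exact ⟨y, hUo' ((hy U hUo hUc).2 hU𝒢), rfl⟩
  · rintro ⟨y, hy, hxy⟩
    exact closure_minimal (singleton_subset_iff.2 (hconsSub hy)) isClosed_closure hxy
end

section
/- Let K be a field and T an indeterminate over K. The map φ : Zar(K(T)) → Zar(K), W ↦ W ∩ K, is a continuous surjection with respect to the Zariski topologies, and its restriction to Zar_0(K(T)) := {V(T) | V ∈ Zar(K)} is a homeomorphism onto Zar(K). -/
open scoped Polynomial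

/-- The Zariski topology on the space of valuation subrings of a field `K`: it is generated
by the basic open sets `B_F = {V | F ⊆ V}`, for `F` a finite subset of `K`. -/
def zarTop (K : Type*) [Field K] : TopologicalSpace (ValuationSubring K) :=
  TopologicalSpace.generateFrom
    {S : Set (ValuationSubring K) |
      ∃ F : Finset K, S = {V : ValuationSubring K | ∀ x ∈ F, x ∈ V}}

/-- The trivial (Gauss) extension `V(T) = V[T]_{M[T]}` of a valuation domain `V` of `K`
to the rational function field `K(T)`, described as a subset of `RatFunc K`: the
fractions `f/g` with `f, g ∈ V[T]` and `g ∉ M[T]` (i.e. some coefficient of `g`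
is a unit of `V`). -/
noncomputable def trivialExtSet {K : Type*} [Field K] (V : ValuationSubring K) :
    Set (RatFunc K) :=
  {h | ∃ f g : K[X], (∀ i, f.coeff i ∈ V) ∧ (∀ i, g.coeff i ∈ V) ∧
    (∃ i, g.coeff i ≠ 0 ∧ (g.coeff i)⁻¹ ∈ V) ∧
    h = algebraMap K[X] (RatFunc K) f / algebraMap K[X] (RatFunc K) g}

/-- A subring `R` of `K(T)` is a `K`-function ring (in the sense of Halter-Koch) if
`T, T⁻¹ ∈ R` and `f(0) ∈ f·R` for every nonzero polynomial `f ∈ K[T]`. -/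
def IsKFunctionRing {K : Type*} [Field K] (R : Subring (RatFunc K)) : Prop :=
  RatFunc.X ∈ R ∧ (RatFunc.X : RatFunc K)⁻¹ ∈ R ∧
    ∀ f : K[X], f ≠ 0 → ∃ r ∈ R,
      algebraMap K (RatFunc K) (f.coeff 0) = algebraMap K[X] (RatFunc K) f * r

namespace ZarHK

open Polynomial

variable {K : Type*} [Field K] (V : ValuationSubring K)

/-- A polynomial with all coefficients in `V`, at least one of which is a unit of `V`. -/
def Good (p : K[X]) : Prop :=
  (∀ i, p.coeff i ∈ V) ∧ ∃ i, p.coeff i ≠ 0 ∧ (p.coeff i)⁻¹ ∈ V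

variable {V}

lemma good_one : Good V 1 := by
  refine ⟨fun i => ?_, 0, by simp, by simpa using one_mem V⟩
  rcases eq_or_ne i 0 with rfl | h
  · simpa [coeff_one] using one_mem V
  · simpa [coeff_one, h] using zero_mem V

lemma Good.ne_zero {p : K[X]} (hp : Good V p) : p ≠ 0 := by
  obtain ⟨i, hi, -⟩ := hp.2
  exact fun h => hi (by simp [h])

lemma coeffMem_mul {p q : K[X]} (hp : ∀ i, p.coeff i ∈ V) (hq : ∀ i, q.coeff i ∈ V) :
    ∀ i, (p * q).coeff i ∈ V := by
  intro n
  rw [coeff_mul]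
  exact sum_mem fun c _ => mul_mem (hp _) (hq _)

/-- Gauss's lemma for local domains: a product of polynomials each having a unit
coefficient has a unit coefficient. -/
lemma exists_isUnit_coeff_mul {R : Type*} [CommRing R] [IsDomain R] [IsLocalRing R]
    {P Q : R[X]} (hP : ∃ i, IsUnit (P.coeff i)) (hQ : ∃ i, IsUnit (Q.coeff i)) :
    ∃ i, IsUnit ((P * Q).coeff i) := by
  classical
  have key : ∀ S : R[X], (∃ i, IsUnit (S.coeff i)) ↔ S.map (IsLocalRing.residue R) ≠ 0 := by
    intro S
    simp only [← IsLocalRing.residue_ne_zero_iff_isUnit, Ne, Polynomial.ext_iff, coeff_map,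
      coeff_zero, not_forall]
  rw [key] at hP hQ ⊢
  rw [Polynomial.map_mul]
  exact mul_ne_zero hP hQ

lemma Good.mul {p q : K[X]} (hp : Good V p) (hq : Good V q) : Good V (p * q) := by
  classical
  refine ⟨coeffMem_mul hp.1 hq.1, ?_⟩
  have hsub : ∀ r : K[X], (∀ i, r.coeff i ∈ V) → (↑r.coeffs : Set K) ⊆ V.toSubring := by
    intro r hr c hc
    obtain ⟨n, -, rfl⟩ := Polynomial.mem_coeffs_iff.mp hc
    exact hr n
  letI : IsLocalRing ↥V.toSubring := inferInstanceAs (IsLocalRing ↥V)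
  letI : IsDomain ↥V.toSubring := inferInstanceAs (IsDomain ↥V)
  set P := p.toSubring V.toSubring (hsub p hp.1) with hP
  set Q := q.toSubring V.toSubring (hsub q hq.1) with hQ
  have hmap : ∀ (r : K[X]) (hr : (↑r.coeffs : Set K) ⊆ V.toSubring),
      Polynomial.map V.toSubring.subtype (r.toSubring V.toSubring hr) = r :=
    fun r hr => r.map_toSubring V.toSubring hr
  have hunit : ∀ (r : K[X]) (hr : ∀ i, r.coeff i ∈ V) (i : ℕ),
      r.coeff i ≠ 0 → (r.coeff i)⁻¹ ∈ V →
      IsUnit ((r.toSubring V.toSubring (hsub r hr)).coeff i) := by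
    intro r hr i h0 hinv
    refine isUnit_iff_exists.mpr ⟨⟨(r.coeff i)⁻¹, hinv⟩, ?_, ?_⟩ <;>
    · apply Subtype.ext
      push_cast [coeff_toSubring]
      simp [h0, mul_inv_cancel₀, inv_mul_cancel₀]
  obtain ⟨i, hi⟩ : ∃ i, IsUnit ((P * Q).coeff i) := by
    obtain ⟨ip, h0p, hvp⟩ := hp.2
    obtain ⟨iq, h0q, hvq⟩ := hq.2
    exact exists_isUnit_coeff_mul ⟨ip, hunit p hp.1 ip h0p hvp⟩ ⟨iq, hunit q hq.1 iq h0q hvq⟩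
  have hcoe : ((P * Q).coeff i : K) = (p * q).coeff i := by
    have : Polynomial.map V.toSubring.subtype (P * Q) = p * q := by
      rw [Polynomial.map_mul, hmap, hmap]
    calc ((P * Q).coeff i : K) = (Polynomial.map V.toSubring.subtype (P * Q)).coeff i := by
          rw [coeff_map]; rfl
      _ = (p * q).coeff i := by rw [this]
  obtain ⟨u, hu1⟩ := isUnit_iff_exists.mp hi
  have hu1' : ((P * Q).coeff i : K) * (u : K) = 1 := by
    have := congrArg (Subtype.val) hu1.1
    push_cast at this
    exact this
  refine ⟨i, ?_, ?_⟩
  · rw [← hcoe]; intro h; rw [h, zero_mul] at hu1'; simp at hu1'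
  · have hne : ((P * Q).coeff i : K) ≠ 0 := by
      intro h; rw [h, zero_mul] at hu1'; simp at hu1'
    rw [← hcoe, inv_eq_of_mul_eq_one_right hu1']
    exact u.2

/-- In a valuation subring, any nonempty finite set of field elements has an element
dividing all the others. -/
lemma finset_exists_div_mem (V : ValuationSubring K) (S : Finset K) (hS : S.Nonempty) :
    ∃ c ∈ S, ∀ x ∈ S, x * c⁻¹ ∈ V := by
  classical
  revert hS
  induction S using Finset.cons_induction with
  | empty => simp
  | cons a s ha ih =>
    intro _
    rcases s.eq_empty_or_nonempty with rfl | hs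
    · refine ⟨a, Finset.mem_cons_self a _, ?_⟩
      intro x hx
      simp only [Finset.mem_cons, Finset.notMem_empty, or_false] at hx
      subst hx
      rcases eq_or_ne x 0 with rfl | h0
      · simpa using zero_mem V
      · simpa [mul_inv_cancel₀ h0] using one_mem V
    · obtain ⟨c, hcs, hc⟩ := ih hs
      by_cases hac : a * c⁻¹ ∈ V
      · refine ⟨c, Finset.mem_cons_of_mem hcs, ?_⟩
        intro x hx
        rcases Finset.mem_cons.mp hx with rfl | hx
        · exact hac
        · exact hc x hx
      · have ha0 : a ≠ 0 := by
          rintro rfl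
          exact hac (by simpa using zero_mem V)
        have hc0 : c ≠ 0 := by
          rintro rfl
          exact hac (by simpa using zero_mem V)
        have hinv : c * a⁻¹ ∈ V := by
          rcases V.mem_or_inv_mem (c * a⁻¹) with h | h
          · exact h
          · rw [mul_inv_rev, inv_inv] at h
            exact absurd h hac
        refine ⟨a, Finset.mem_cons_self a _, ?_⟩
        intro x hx
        rcases Finset.mem_cons.mp hx with rfl | hx
        · simpa [mul_inv_cancel₀ ha0] using one_mem V
        · have hxa : x * a⁻¹ = (x * c⁻¹) * (c * a⁻¹) := by field_simp
          rw [hxa]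
          exact mul_mem (hc x hx) hinv

/-- Every nonzero polynomial has a coefficient of minimal valuation. -/
lemma exists_dominant (V : ValuationSubring K) {p : K[X]} (hp : p ≠ 0) :
    ∃ j ∈ p.support, ∀ i, p.coeff i * (p.coeff j)⁻¹ ∈ V := by
  classical
  have hne : (p.support.image p.coeff).Nonempty :=
    (Polynomial.support_nonempty.mpr hp).image _
  obtain ⟨c, hcS, hc⟩ := finset_exists_div_mem V _ hne
  obtain ⟨j, hj, rfl⟩ := Finset.mem_image.mp hcS
  refine ⟨j, hj, fun i => ?_⟩
  by_cases hi : i ∈ p.support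
  · exact hc _ (Finset.mem_image_of_mem _ hi)
  · rw [Polynomial.notMem_support_iff.mp hi, zero_mul]
    exact zero_mem V

/-- Scaling membership: if all coefficients of `p` and `q` divided by `c = q.coeff j ≠ 0`
lie in `V`, then `p/q ∈ V(T)`. -/
lemma div_mem_trivialExtSet {p q : K[X]} {j : ℕ} (hj : q.coeff j ≠ 0)
    (hp : ∀ i, p.coeff i * (q.coeff j)⁻¹ ∈ V) (hq : ∀ i, q.coeff i * (q.coeff j)⁻¹ ∈ V) :
    algebraMap K[X] (RatFunc K) p / algebraMap K[X] (RatFunc K) q ∈ trivialExtSet V := by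
  set c := q.coeff j with hc
  refine ⟨p * C c⁻¹, q * C c⁻¹, ?_, ?_, ⟨j, ?_, ?_⟩, ?_⟩
  · intro i; rw [coeff_mul_C]; exact hp i
  · intro i; rw [coeff_mul_C]; exact hq i
  · rw [coeff_mul_C, ← hc, mul_inv_cancel₀ hj]; exact one_ne_zero
  · rw [coeff_mul_C, ← hc, mul_inv_cancel₀ hj, inv_one]; exact one_mem V
  · have hC : algebraMap K[X] (RatFunc K) (C c⁻¹) ≠ 0 :=
      RatFunc.algebraMap_ne_zero (C_ne_zero.mpr (inv_ne_zero hj))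
    rw [map_mul, map_mul, mul_div_mul_right _ _ hC]

/-- The trivial extension as a subring of `RatFunc K`. -/
noncomputable def trivialExtSubring (V : ValuationSubring K) : Subring (RatFunc K) where
  carrier := trivialExtSet V
  one_mem' := ⟨1, 1, good_one.1, good_one.1, good_one.2, by simp⟩
  zero_mem' := ⟨0, 1, fun i => by simpa using zero_mem V, good_one.1, good_one.2, by simp⟩
  mul_mem' := by
    rintro a b ⟨f₁, g₁, hf₁, hg₁, hu₁, rfl⟩ ⟨f₂, g₂, hf₂, hg₂, hu₂, rfl⟩
    refine ⟨f₁ * f₂, g₁ * g₂, coeffMem_mul hf₁ hf₂, ?_, ?_, ?_⟩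
    · exact (Good.mul ⟨hg₁, hu₁⟩ ⟨hg₂, hu₂⟩).1
    · exact (Good.mul ⟨hg₁, hu₁⟩ ⟨hg₂, hu₂⟩).2
    · rw [map_mul, map_mul, div_mul_div_comm]
  add_mem' := by
    rintro a b ⟨f₁, g₁, hf₁, hg₁, hu₁, rfl⟩ ⟨f₂, g₂, hf₂, hg₂, hu₂, rfl⟩
    have h₁ : algebraMap K[X] (RatFunc K) g₁ ≠ 0 :=
      RatFunc.algebraMap_ne_zero (Good.ne_zero ⟨hg₁, hu₁⟩)
    have h₂ : algebraMap K[X] (RatFunc K) g₂ ≠ 0 :=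
      RatFunc.algebraMap_ne_zero (Good.ne_zero ⟨hg₂, hu₂⟩)
    refine ⟨f₁ * g₂ + g₁ * f₂, g₁ * g₂, ?_, ?_, ?_, ?_⟩
    · intro i
      rw [coeff_add]
      exact add_mem (coeffMem_mul hf₁ hg₂ i) (coeffMem_mul hg₁ hf₂ i)
    · exact (Good.mul ⟨hg₁, hu₁⟩ ⟨hg₂, hu₂⟩).1
    · exact (Good.mul ⟨hg₁, hu₁⟩ ⟨hg₂, hu₂⟩).2
    · rw [div_add_div _ _ h₁ h₂, map_mul, map_add, map_mul, map_mul]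
  neg_mem' := by
    rintro a ⟨f, g, hf, hg, hu, rfl⟩
    refine ⟨-f, g, fun i => ?_, hg, hu, ?_⟩
    · rw [coeff_neg]; exact neg_mem (hf i)
    · rw [map_neg, neg_div]

set_option maxHeartbeats 1000000 in
/-- The trivial extension as a valuation subring of `RatFunc K`. -/
noncomputable def trivialExt (V : ValuationSubring K) : ValuationSubring (RatFunc K) where
  toSubring := trivialExtSubring V
  mem_or_inv_mem' := by
    intro h
    show h ∈ trivialExtSet V ∨ h⁻¹ ∈ trivialExtSet V
    rcases eq_or_ne h 0 with rfl | h0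
    · left
      exact ⟨0, 1, fun i => by simpa using zero_mem V, good_one.1, good_one.2, by simp⟩
    · classical
      set p := h.num with hp
      set q := h.denom with hq
      have hp0 : p ≠ 0 := RatFunc.num_ne_zero h0
      have hq0 : q ≠ 0 := h.denom_ne_zero
      have hS : ((p.support.image p.coeff) ∪ (q.support.image q.coeff)).Nonempty :=
        Finset.Nonempty.inl ((Polynomial.support_nonempty.mpr hp0).image _)
      obtain ⟨c, hcS, hc⟩ := finset_exists_div_mem V _ hS
      have hdp : ∀ i, p.coeff i * c⁻¹ ∈ V := by
        intro i
        by_cases hi : i ∈ p.support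
        · exact hc _ (Finset.mem_union_left _ (Finset.mem_image_of_mem _ hi))
        · rw [Polynomial.notMem_support_iff.mp hi, zero_mul]; exact zero_mem V
      have hdq : ∀ i, q.coeff i * c⁻¹ ∈ V := by
        intro i
        by_cases hi : i ∈ q.support
        · exact hc _ (Finset.mem_union_right _ (Finset.mem_image_of_mem _ hi))
        · rw [Polynomial.notMem_support_iff.mp hi, zero_mul]; exact zero_mem V
      have hnum : algebraMap K[X] (RatFunc K) p / algebraMap K[X] (RatFunc K) q = h :=
        h.num_div_denom
      rcases Finset.mem_union.mp hcS with hcp | hcq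
      · -- c is a coefficient of p : h⁻¹ ∈ V(T)
        obtain ⟨j, hj, hcj⟩ := Finset.mem_image.mp hcp
        subst hcj
        right
        have hinv : h⁻¹ = algebraMap K[X] (RatFunc K) q / algebraMap K[X] (RatFunc K) p := by
          rw [← hnum, inv_div]
        rw [hinv]
        exact div_mem_trivialExtSet (Polynomial.mem_support_iff.mp hj) hdq hdp
      · obtain ⟨j, hj, hcj⟩ := Finset.mem_image.mp hcq
        subst hcj
        left
        rw [← hnum]
        exact div_mem_trivialExtSet (Polynomial.mem_support_iff.mp hj) hdp hdq

lemma coe_trivialExt (V : ValuationSubring K) :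
    (trivialExt V : Set (RatFunc K)) = trivialExtSet V := rfl

lemma mem_trivialExt {V : ValuationSubring K} {h : RatFunc K} :
    h ∈ trivialExt V ↔ h ∈ trivialExtSet V := Iff.rfl

lemma comap_trivialExt (V : ValuationSubring K) :
    (trivialExt V).comap (algebraMap K (RatFunc K)) = V := by
  ext x
  rw [ValuationSubring.mem_comap]
  constructor
  · rintro ⟨f, g, hf, hg, ⟨i, h0, hinv⟩, heq⟩
    have hg0 : algebraMap K[X] (RatFunc K) g ≠ 0 :=
      RatFunc.algebraMap_ne_zero (Good.ne_zero ⟨hg, ⟨i, h0, hinv⟩⟩)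
    have hC : algebraMap K (RatFunc K) x = algebraMap K[X] (RatFunc K) (C x) := by
      rw [RatFunc.algebraMap_C, RatFunc.algebraMap_eq_C]
    have hfg : C x * g = f := by
      apply RatFunc.algebraMap_injective K
      rw [map_mul, ← hC, ← eq_div_iff hg0]
      exact heq
    have hx : x * g.coeff i = f.coeff i := by
      rw [← hfg, coeff_C_mul]
    have : x = f.coeff i * (g.coeff i)⁻¹ := by
      field_simp [h0]
      linear_combination hx
    rw [this]
    exact mul_mem (hf i) hinv
  · intro hx
    refine ⟨C x, 1, fun i => ?_, good_one.1, good_one.2, ?_⟩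
    · rcases eq_or_ne i 0 with rfl | h
      · simpa [coeff_C] using hx
      · simpa [coeff_C, h] using zero_mem V
    · rw [map_one, div_one, RatFunc.algebraMap_C, RatFunc.algebraMap_eq_C]

/-- Domination multiplies. -/
lemma dom_of_dom_mul {p q : K[X]} {a b : K} (hp : ∀ i, p.coeff i * a⁻¹ ∈ V)
    (hq : ∀ i, q.coeff i * b⁻¹ ∈ V) : ∀ i, (p * q).coeff i * (a * b)⁻¹ ∈ V := by
  intro n
  have h1 : ∀ i, (p * C a⁻¹).coeff i ∈ V := fun i => by rw [coeff_mul_C]; exact hp i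
  have h2 : ∀ i, (q * C b⁻¹).coeff i ∈ V := fun i => by rw [coeff_mul_C]; exact hq i
  have h3 := coeffMem_mul h1 h2 n
  have key : (p * C a⁻¹) * (q * C b⁻¹) = (p * q) * C ((a * b)⁻¹) := by
    rw [mul_inv, C_mul]; ring
  rw [key, coeff_mul_C] at h3
  exact h3

/-- If `a` is an exact denominator for `r` and `b` dominates `r`, then `a/b ∈ V`. -/
lemma exact_div_dom {r : K[X]} {a b : K}
    (hex : ∃ i, r.coeff i * a⁻¹ ≠ 0 ∧ (r.coeff i * a⁻¹)⁻¹ ∈ V)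
    (hdom : ∀ i, r.coeff i * b⁻¹ ∈ V) : a * b⁻¹ ∈ V := by
  obtain ⟨i, hne, hinv⟩ := hex
  have hri : r.coeff i ≠ 0 := by
    intro hh; rw [hh, zero_mul] at hne; exact hne rfl
  have key : a * b⁻¹ = (r.coeff i * b⁻¹) * (r.coeff i * a⁻¹)⁻¹ := by
    rw [mul_inv_rev, inv_inv,
      show r.coeff i * b⁻¹ * (a * (r.coeff i)⁻¹) = a * b⁻¹ * (r.coeff i * (r.coeff i)⁻¹)
        from by ring, mul_inv_cancel₀ hri, mul_one]
  rw [key]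
  exact mul_mem (hdom i) hinv

/-- Key openness lemma: for any `h ∈ K(T)`, the set of valuation subrings `V` of `K`
with `h ∈ V(T)` is open in the Zariski topology. -/
lemma isOpen_mem_trivialExtSet (h : RatFunc K) :
    @IsOpen _ (zarTop K) {V : ValuationSubring K | h ∈ trivialExtSet V} := by
  classical
  letI : TopologicalSpace (ValuationSubring K) := zarTop K
  rcases eq_or_ne h 0 with rfl | h0
  · have : {V : ValuationSubring K | (0 : RatFunc K) ∈ trivialExtSet V} = Set.univ := by
      refine Set.eq_univ_iff_forall.mpr fun V => ?_
      exact ⟨0, 1, fun i => by simpa using zero_mem V, good_one.1, good_one.2, by simp⟩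
    rw [this]
    exact isOpen_univ
  · set p := h.num with hp
    set q := h.denom with hq
    have hp0 : p ≠ 0 := RatFunc.num_ne_zero h0
    have hq0 : q ≠ 0 := h.denom_ne_zero
    have hnum : algebraMap K[X] (RatFunc K) p / algebraMap K[X] (RatFunc K) q = h :=
      h.num_div_denom
    have key : {V : ValuationSubring K | h ∈ trivialExtSet V} =
        ⋃ j ∈ q.support, {V : ValuationSubring K | ∀ x ∈
          (p.support.image fun i => p.coeff i * (q.coeff j)⁻¹) ∪
          (q.support.image fun i => q.coeff i * (q.coeff j)⁻¹), x ∈ V} := by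
      ext V
      simp only [Set.mem_setOf_eq, Set.mem_iUnion, exists_prop]
      constructor
      · rintro ⟨f, g, hf, hg, ⟨i0, hi0, hv0⟩, heq⟩
        have hgood : Good V g := ⟨hg, i0, hi0, hv0⟩
        have hg0 : g ≠ 0 := Good.ne_zero hgood
        have hg0' : algebraMap K[X] (RatFunc K) g ≠ 0 := RatFunc.algebraMap_ne_zero hg0
        have hq0' : algebraMap K[X] (RatFunc K) q ≠ 0 := RatFunc.algebraMap_ne_zero hq0
        have hf0 : f ≠ 0 := by
          rintro rfl
          rw [map_zero, zero_div] at heq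
          exact h0 heq
        have hcross : f * q = p * g := by
          apply RatFunc.algebraMap_injective K
          rw [map_mul, map_mul]
          have hdd : algebraMap K[X] (RatFunc K) f / algebraMap K[X] (RatFunc K) g =
              algebraMap K[X] (RatFunc K) p / algebraMap K[X] (RatFunc K) q := by
            rw [hnum, ← heq]
          rw [div_eq_div_iff hg0' hq0'] at hdd
          exact hdd
        obtain ⟨jq, hjq, domq⟩ := exists_dominant V hq0
        obtain ⟨jp, hjp, domp⟩ := exists_dominant V hp0
        obtain ⟨jf, hjf, domf⟩ := exists_dominant V hf0
        set c := q.coeff jq with hc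
        set d := p.coeff jp with hd
        set e := f.coeff jf with he
        have hcne : c ≠ 0 := Polynomial.mem_support_iff.mp hjq
        have hdne : d ≠ 0 := Polynomial.mem_support_iff.mp hjp
        have hene : e ≠ 0 := Polynomial.mem_support_iff.mp hjf
        -- `d` is exact for `p * g`
        have hgoodpd : Good V (p * C d⁻¹) := by
          refine ⟨fun i => by rw [coeff_mul_C]; exact domp i, jp, ?_, ?_⟩
          · rw [coeff_mul_C, ← hd, mul_inv_cancel₀ hdne]; exact one_ne_zero
          · rw [coeff_mul_C, ← hd, mul_inv_cancel₀ hdne, inv_one]; exact one_mem V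
        have hgoodpg : Good V ((p * g) * C d⁻¹) := by
          have := Good.mul hgoodpd hgood
          have heq2 : (p * C d⁻¹) * g = (p * g) * C d⁻¹ := by ring
          rwa [heq2] at this
        have hex : ∃ i, (p * g).coeff i * d⁻¹ ≠ 0 ∧ ((p * g).coeff i * d⁻¹)⁻¹ ∈ V := by
          obtain ⟨i1, h1, h2⟩ := hgoodpg.2
          rw [coeff_mul_C] at h1 h2
          exact ⟨i1, h1, h2⟩
        -- `e * c` dominates `f * q = p * g`
        have hdom : ∀ i, (p * g).coeff i * (e * c)⁻¹ ∈ V := by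
          intro i
          have := dom_of_dom_mul domf domq i
          rwa [hcross] at this
        have hdc0 : d * (e * c)⁻¹ ∈ V := exact_div_dom hex hdom
        have hdc : d * c⁻¹ ∈ V := by
          have := mul_mem hdc0 (hf jf)
          have heq3 : d * (e * c)⁻¹ * e = d * c⁻¹ := by
            rw [mul_inv, show d * (e⁻¹ * c⁻¹) * e = d * c⁻¹ * (e * e⁻¹) from by ring,
              mul_inv_cancel₀ hene, mul_one]
          rwa [heq3] at this
        refine ⟨jq, hjq, ?_⟩
        intro x hx
        rcases Finset.mem_union.mp hx with hx | hx
        · obtain ⟨i, hi, rfl⟩ := Finset.mem_image.mp hx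
          have heq4 : (p.coeff i * d⁻¹) * (d * c⁻¹) = p.coeff i * c⁻¹ := by
            rw [show (p.coeff i * d⁻¹) * (d * c⁻¹) = p.coeff i * c⁻¹ * (d⁻¹ * d) from by ring,
              inv_mul_cancel₀ hdne, mul_one]
          rw [← heq4]
          exact mul_mem (domp i) hdc
        · obtain ⟨i, hi, rfl⟩ := Finset.mem_image.mp hx
          exact domq i
      · rintro ⟨j, hj, hV⟩
        have hcj : q.coeff j ≠ 0 := Polynomial.mem_support_iff.mp hj
        have hdp : ∀ i, p.coeff i * (q.coeff j)⁻¹ ∈ V := by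
          intro i
          by_cases hi : i ∈ p.support
          · exact hV _ (Finset.mem_union_left _ (Finset.mem_image_of_mem _ hi))
          · rw [Polynomial.notMem_support_iff.mp hi, zero_mul]; exact zero_mem V
        have hdq : ∀ i, q.coeff i * (q.coeff j)⁻¹ ∈ V := by
          intro i
          by_cases hi : i ∈ q.support
          · exact hV _ (Finset.mem_union_right _ (Finset.mem_image_of_mem _ hi))
          · rw [Polynomial.notMem_support_iff.mp hi, zero_mul]; exact zero_mem V
        rw [← hnum]
        exact div_mem_trivialExtSet hcj hdp hdq
    rw [key]
    refine isOpen_biUnion fun j _ => ?_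
    exact TopologicalSpace.GenerateOpen.basic _ ⟨_, rfl⟩

lemma continuous_comap :
    @Continuous _ _ (zarTop (RatFunc K)) (zarTop K)
      (fun W : ValuationSubring (RatFunc K) => W.comap (algebraMap K (RatFunc K))) := by
  classical
  letI : TopologicalSpace (ValuationSubring (RatFunc K)) := zarTop (RatFunc K)
  refine continuous_generateFrom_iff.mpr ?_
  rintro s ⟨F, rfl⟩
  have hpre : (fun W : ValuationSubring (RatFunc K) => W.comap (algebraMap K (RatFunc K))) ⁻¹'
      {V | ∀ x ∈ F, x ∈ V} =
      {W : ValuationSubring (RatFunc K) | ∀ y ∈ F.image (algebraMap K (RatFunc K)), y ∈ W} := by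
    ext W
    simp only [Set.mem_preimage, Set.mem_setOf_eq, Finset.mem_image,
      ValuationSubring.mem_comap]
    constructor
    · rintro hW y ⟨x, hx, rfl⟩
      exact hW x hx
    · intro hW x hx
      exact hW _ ⟨x, hx, rfl⟩
  rw [hpre]
  exact TopologicalSpace.GenerateOpen.basic _ ⟨_, rfl⟩

lemma continuous_trivialExt :
    @Continuous _ _ (zarTop K) (zarTop (RatFunc K))
      (fun V : ValuationSubring K => trivialExt V) := by
  letI : TopologicalSpace (ValuationSubring K) := zarTop K
  refine continuous_generateFrom_iff.mpr ?_
  rintro s ⟨F, rfl⟩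
  have hpre : (fun V : ValuationSubring K => trivialExt V) ⁻¹'
      {W : ValuationSubring (RatFunc K) | ∀ x ∈ F, x ∈ W} =
      ⋂ x ∈ F, {V : ValuationSubring K | x ∈ trivialExtSet V} := by
    ext V
    simp only [Set.mem_preimage, Set.mem_setOf_eq, Set.mem_iInter, mem_trivialExt]
  rw [hpre]
  exact isOpen_biInter_finset fun x _ => isOpen_mem_trivialExtSet x

end ZarHK

/-- The canonical map `φ : Zar(K(T)) → Zar(K)`, `W ↦ W ∩ K`, is a continuous surjection
for the Zariski topologies, and its restriction to
`Zar₀(K(T)) = {V(T) | V ∈ Zar(K)}` is a homeomorphism onto `Zar(K)`. -/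
theorem zar_restriction_homeomorph (K : Type*) [Field K] :
    letI : TopologicalSpace (ValuationSubring (RatFunc K)) := zarTop (RatFunc K)
    letI : TopologicalSpace (ValuationSubring K) := zarTop K
    Continuous (fun W : ValuationSubring (RatFunc K) =>
        W.comap (algebraMap K (RatFunc K))) ∧
    Function.Surjective (fun W : ValuationSubring (RatFunc K) =>
        W.comap (algebraMap K (RatFunc K))) ∧
    IsHomeomorph
      (fun W : {W : ValuationSubring (RatFunc K) //
          ∃ V : ValuationSubring K, (W : Set (RatFunc K)) = trivialExtSet V} =>
        (W : ValuationSubring (RatFunc K)).comap (algebraMap K (RatFunc K))) := by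
  letI : TopologicalSpace (ValuationSubring (RatFunc K)) := zarTop (RatFunc K)
  letI : TopologicalSpace (ValuationSubring K) := zarTop K
  refine ⟨ZarHK.continuous_comap, fun V => ⟨ZarHK.trivialExt V, ZarHK.comap_trivialExt V⟩, ?_⟩
  rw [isHomeomorph_iff_exists_inverse]
  refine ⟨ZarHK.continuous_comap.comp continuous_subtype_val,
    fun V => ⟨ZarHK.trivialExt V, V, rfl⟩, ?_, fun V => ZarHK.comap_trivialExt V, ?_⟩
  · rintro ⟨W, V, hWV⟩
    have hW : W = ZarHK.trivialExt V := by
      apply SetLike.coe_injective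
      rw [hWV]
      rfl
    apply Subtype.ext
    show ZarHK.trivialExt (W.comap (algebraMap K (RatFunc K))) = W
    rw [hW, ZarHK.comap_trivialExt]
  · exact Continuous.subtype_mk ZarHK.continuous_trivialExt _
end

section
/- Let K be a field, T an indeterminate, and R a K-function ring in K(T). Then R is a Bézout domain with quotient field K(T); moreover, for every polynomial f = f₀ + f₁T + ... + f_rT^r ∈ K[T], the ideal (f₀, f₁, ..., f_r)R is principal and equals fR. -/
open scoped Polynomial

set_option maxHeartbeats 1000000
set_option synthInstance.maxHeartbeats 400000

namespace KFR

variable {K : Type*} [Field K] (R : Subring (RatFunc K))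

theorem mem_span_of_eq_mul {x y r : RatFunc K} (hr : r ∈ R) (h : y = x * r) :
    y ∈ Submodule.span ↥R {x} :=
  Submodule.mem_span_singleton.mpr ⟨⟨r, hr⟩, by rw [h, mul_comm]; rfl⟩

theorem algC (a : K) :
    algebraMap K[X] (RatFunc K) (Polynomial.C a) = algebraMap K (RatFunc K) a := by
  rw [RatFunc.algebraMap_C, ← RatFunc.algebraMap_eq_C]

variable (hR : IsKFunctionRing R)
include hR

theorem coeff_zero_mem (f : K[X]) :
    algebraMap K (RatFunc K) (f.coeff 0) ∈
      Submodule.span ↥R {algebraMap K[X] (RatFunc K) f} := by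
  rcases eq_or_ne f 0 with rfl | hf
  · simp
  · obtain ⟨r, hr, hEq⟩ := hR.2.2 f hf
    exact mem_span_of_eq_mul R hr hEq

theorem coeff_mem (f : K[X]) (i : ℕ) :
    algebraMap K (RatFunc K) (f.coeff i) ∈
      Submodule.span ↥R {algebraMap K[X] (RatFunc K) f} := by
  suffices H : ∀ n (f : K[X]), f.natDegree ≤ n → ∀ i,
      algebraMap K (RatFunc K) (f.coeff i) ∈
        Submodule.span ↥R {algebraMap K[X] (RatFunc K) f} from
    H f.natDegree f le_rfl i
  intro n
  induction n with
  | zero =>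
    intro f hf i
    match i with
    | 0 => exact coeff_zero_mem R hR f
    | (i+1) =>
      rw [Polynomial.coeff_eq_zero_of_natDegree_lt (by omega)]
      simp
  | succ n ih =>
    intro f hf i
    match i with
    | 0 => exact coeff_zero_mem R hR f
    | (i+1) =>
      rw [← Polynomial.coeff_divX]
      have h1 : RatFunc.X * algebraMap K[X] (RatFunc K) f.divX
            + algebraMap K (RatFunc K) (f.coeff 0) = algebraMap K[X] (RatFunc K) f := by
        rw [← algC, ← RatFunc.algebraMap_X (K := K), ← map_mul, ← map_add,
          Polynomial.X_mul_divX_add]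
      have key : algebraMap K[X] (RatFunc K) f.divX =
          (RatFunc.X : RatFunc K)⁻¹ *
            (algebraMap K[X] (RatFunc K) f - algebraMap K (RatFunc K) (f.coeff 0)) := by
        rw [← h1]
        rw [add_sub_cancel_right, ← mul_assoc, inv_mul_cancel₀ RatFunc.X_ne_zero, one_mul]
      have hdiv : algebraMap K[X] (RatFunc K) f.divX ∈
          Submodule.span ↥R {algebraMap K[X] (RatFunc K) f} := by
        have hsub := Submodule.sub_mem _
          (Submodule.mem_span_singleton_self (algebraMap K[X] (RatFunc K) f))
          (coeff_zero_mem R hR f)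
        have := Submodule.smul_mem _ (⟨_, hR.2.1⟩ : ↥R) hsub
        rw [key]; exact this
      have hle : Submodule.span ↥R {algebraMap K[X] (RatFunc K) f.divX} ≤
          Submodule.span ↥R {algebraMap K[X] (RatFunc K) f} :=
        Submodule.span_le.mpr (Set.singleton_subset_iff.mpr hdiv)
      exact hle (ih f.divX (by
        have := Polynomial.natDegree_divX_eq_natDegree_tsub_one (p := f)
        omega) i)

theorem poly_mem (f : K[X]) :
    algebraMap K[X] (RatFunc K) f ∈
      Submodule.span ↥R (Set.range fun i => algebraMap K (RatFunc K) (f.coeff i)) := by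
  have hsum := congrArg (algebraMap K[X] (RatFunc K)) f.as_sum_range_C_mul_X_pow
  rw [map_sum] at hsum
  rw [hsum]
  refine Submodule.sum_mem _ fun i _ => ?_
  rw [map_mul, map_pow, RatFunc.algebraMap_X, algC, mul_comm]
  exact Submodule.smul_mem _ (⟨_, pow_mem hR.1 i⟩ : ↥R)
    (Submodule.subset_span ⟨i, rfl⟩)

theorem span_coeffs_eq (f : K[X]) :
    Submodule.span ↥R (Set.range fun i => algebraMap K (RatFunc K) (f.coeff i)) =
      Submodule.span ↥R {algebraMap K[X] (RatFunc K) f} := by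
  refine le_antisymm (Submodule.span_le.mpr ?_) (Submodule.span_le.mpr ?_)
  · rintro _ ⟨i, rfl⟩
    exact coeff_mem R hR f i
  · rintro _ rfl
    exact poly_mem R hR f

theorem combine (f g : K[X]) :
    ∃ p : K[X], (g ≠ 0 → p ≠ 0) ∧
      algebraMap K[X] (RatFunc K) f ∈ Submodule.span ↥R {algebraMap K[X] (RatFunc K) p} ∧
      algebraMap K[X] (RatFunc K) g ∈ Submodule.span ↥R {algebraMap K[X] (RatFunc K) p} ∧
      algebraMap K[X] (RatFunc K) p ∈
        Submodule.span ↥R {algebraMap K[X] (RatFunc K) f, algebraMap K[X] (RatFunc K) g} := by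
  set N := f.natDegree + 1 with hN
  set p := f + Polynomial.X ^ N * g with hp
  have hpc : ∀ i, p.coeff i = f.coeff i + if N ≤ i then g.coeff (i - N) else 0 := by
    intro i
    rw [hp, Polynomial.coeff_add, mul_comm, Polynomial.coeff_mul_X_pow']
  have hfhigh : ∀ i, N ≤ i → f.coeff i = 0 := fun i hi =>
    Polynomial.coeff_eq_zero_of_natDegree_lt (by omega)
  have hflow : ∀ i, i < N → p.coeff i = f.coeff i := by
    intro i hi
    rw [hpc i, if_neg (by omega), add_zero]
  have hgc : ∀ j, p.coeff (N + j) = g.coeff j := by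
    intro j
    rw [hpc, hfhigh _ (by omega), if_pos (by omega), zero_add,
      Nat.add_sub_cancel_left]
  refine ⟨p, ?_, ?_, ?_, ?_⟩
  · intro hg0 hp0
    apply Polynomial.leadingCoeff_ne_zero.mpr hg0
    rw [Polynomial.leadingCoeff, ← hgc g.natDegree, hp0, Polynomial.coeff_zero]
  · refine Submodule.span_le.mpr ?_ (poly_mem R hR f)
    rintro _ ⟨i, rfl⟩
    dsimp only
    rcases lt_or_ge i N with h | h
    · rw [← hflow i h]; exact coeff_mem R hR p i
    · rw [hfhigh i h]; simp
  · refine Submodule.span_le.mpr ?_ (poly_mem R hR g)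
    rintro _ ⟨j, rfl⟩
    dsimp only
    rw [← hgc j]; exact coeff_mem R hR p (N + j)
  · have hle1 : Submodule.span ↥R {algebraMap K[X] (RatFunc K) f} ≤
        Submodule.span ↥R {algebraMap K[X] (RatFunc K) f, algebraMap K[X] (RatFunc K) g} :=
      Submodule.span_mono (Set.singleton_subset_iff.mpr (Set.mem_insert _ _))
    have hle2 : Submodule.span ↥R {algebraMap K[X] (RatFunc K) g} ≤
        Submodule.span ↥R {algebraMap K[X] (RatFunc K) f, algebraMap K[X] (RatFunc K) g} :=
      Submodule.span_mono (Set.singleton_subset_iff.mpr (Set.mem_insert_iff.mpr (Or.inr rfl)))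
    refine Submodule.span_le.mpr ?_ (poly_mem R hR p)
    rintro _ ⟨i, rfl⟩
    dsimp only
    rw [hpc i, map_add]
    refine Submodule.add_mem _ (hle1 (coeff_mem R hR f i)) ?_
    split
    · exact hle2 (coeff_mem R hR g _)
    · simp

end KFR

/-- A `K`-function ring `R` is a Bézout domain with quotient field `K(T)`; moreover, for
every polynomial `f = f₀ + f₁T + ⋯ + f_rT^r ∈ K[T]`, the `R`-module generated by the
coefficients `f₀, …, f_r` equals the principal `R`-module `fR` (inside `K(T)`). -/
theorem kFunctionRing_bezout {K : Type*} [Field K] (R : Subring (RatFunc K))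
    (hR : IsKFunctionRing R) :
    IsBezout ↥R ∧ IsFractionRing ↥R (RatFunc K) ∧
      ∀ f : K[X],
        Submodule.span ↥R (Set.range fun i => algebraMap K (RatFunc K) (f.coeff i)) =
          Submodule.span ↥R {algebraMap K[X] (RatFunc K) f} := by
  refine ⟨?_, ?_, fun f => KFR.span_coeffs_eq R hR f⟩
  · -- Bézout
    rw [IsBezout.iff_span_pair_isPrincipal]
    intro a b
    rcases eq_or_ne b 0 with rfl | hb0
    · exact ⟨⟨a, by rw [Set.pair_comm,
        show ({(0 : ↥R), a} : Set ↥R) = insert 0 {a} from rfl,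
        Ideal.span, Submodule.span_insert_zero]⟩⟩
    · obtain ⟨na, da, hda, haeq⟩ :
          ∃ n d : K[X], d ≠ 0 ∧
            (a : RatFunc K) = algebraMap K[X] (RatFunc K) n / algebraMap K[X] (RatFunc K) d :=
        ⟨RatFunc.num (a : RatFunc K), RatFunc.denom (a : RatFunc K),
          RatFunc.denom_ne_zero _, (RatFunc.num_div_denom _).symm⟩
      have hbK : (b : RatFunc K) ≠ 0 := fun h => hb0 (Subtype.ext h)
      obtain ⟨nb, db, hdb, hnb, hbeq⟩ :
          ∃ n d : K[X], d ≠ 0 ∧ n ≠ 0 ∧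
            (b : RatFunc K) = algebraMap K[X] (RatFunc K) n / algebraMap K[X] (RatFunc K) d :=
        ⟨RatFunc.num (b : RatFunc K), RatFunc.denom (b : RatFunc K),
          RatFunc.denom_ne_zero _, RatFunc.num_ne_zero hbK,
          (RatFunc.num_div_denom _).symm⟩
      set f := na * db with hfdef
      set g := nb * da with hgdef
      set d := da * db with hddef
      have hφda : algebraMap K[X] (RatFunc K) da ≠ 0 := RatFunc.algebraMap_ne_zero hda
      have hφdb : algebraMap K[X] (RatFunc K) db ≠ 0 := RatFunc.algebraMap_ne_zero hdb
      have hφd : algebraMap K[X] (RatFunc K) d ≠ 0 :=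
        RatFunc.algebraMap_ne_zero (mul_ne_zero hda hdb)
      have ha : (a : RatFunc K) * algebraMap K[X] (RatFunc K) d
          = algebraMap K[X] (RatFunc K) f := by
        rw [haeq, hddef, hfdef, map_mul, map_mul, div_mul_eq_mul_div, div_eq_iff hφda]
        ring
      have hb : (b : RatFunc K) * algebraMap K[X] (RatFunc K) d
          = algebraMap K[X] (RatFunc K) g := by
        rw [hbeq, hddef, hgdef, map_mul, map_mul, div_mul_eq_mul_div, div_eq_iff hφdb]
        ring
      have hg0 : g ≠ 0 := mul_ne_zero hnb hda
      obtain ⟨p, hpne, hfp, hgp, hpfg⟩ := KFR.combine R hR f g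
      have hφp : algebraMap K[X] (RatFunc K) p ≠ 0 :=
        RatFunc.algebraMap_ne_zero (hpne hg0)
      obtain ⟨u, hu⟩ := Submodule.mem_span_singleton.mp hfp
      obtain ⟨v, hv⟩ := Submodule.mem_span_singleton.mp hgp
      obtain ⟨s, t, hst⟩ := Submodule.mem_span_pair.mp hpfg
      have hu' : (u : RatFunc K) * algebraMap K[X] (RatFunc K) p
          = algebraMap K[X] (RatFunc K) f := hu
      have hv' : (v : RatFunc K) * algebraMap K[X] (RatFunc K) p
          = algebraMap K[X] (RatFunc K) g := hv
      have hst' : (s : RatFunc K) * algebraMap K[X] (RatFunc K) f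
          + (t : RatFunc K) * algebraMap K[X] (RatFunc K) g
          = algebraMap K[X] (RatFunc K) p := hst
      have hc' : ((s : RatFunc K) * (a : RatFunc K) + (t : RatFunc K) * (b : RatFunc K))
          * algebraMap K[X] (RatFunc K) d = algebraMap K[X] (RatFunc K) p := by
        rw [add_mul, mul_assoc, mul_assoc, ha, hb]
        exact hst'
      have key_a : (s * a + t * b) * u = a := by
        apply Subtype.ext
        apply mul_right_cancel₀ hφd
        push_cast
        calc ((s : RatFunc K) * a + (t : RatFunc K) * b) * u * algebraMap K[X] (RatFunc K) d
            = (u : RatFunc K) * (((s : RatFunc K) * a + (t : RatFunc K) * b)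
              * algebraMap K[X] (RatFunc K) d) := by ring
          _ = (u : RatFunc K) * algebraMap K[X] (RatFunc K) p := by rw [hc']
          _ = algebraMap K[X] (RatFunc K) f := hu'
          _ = (a : RatFunc K) * algebraMap K[X] (RatFunc K) d := ha.symm
      have key_b : (s * a + t * b) * v = b := by
        apply Subtype.ext
        apply mul_right_cancel₀ hφd
        push_cast
        calc ((s : RatFunc K) * a + (t : RatFunc K) * b) * v * algebraMap K[X] (RatFunc K) d
            = (v : RatFunc K) * (((s : RatFunc K) * a + (t : RatFunc K) * b)
              * algebraMap K[X] (RatFunc K) d) := by ring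
          _ = (v : RatFunc K) * algebraMap K[X] (RatFunc K) p := by rw [hc']
          _ = algebraMap K[X] (RatFunc K) g := hv'
          _ = (b : RatFunc K) * algebraMap K[X] (RatFunc K) d := hb.symm
      refine ⟨⟨s * a + t * b, le_antisymm ?_ ?_⟩⟩
      · refine Ideal.span_le.mpr ?_
        intro x hx
        simp only [Set.mem_insert_iff, Set.mem_singleton_iff] at hx
        rcases hx with rfl | rfl
        · exact Ideal.mem_span_singleton.mpr ⟨u, key_a.symm⟩
        · exact Ideal.mem_span_singleton.mpr ⟨v, key_b.symm⟩
      · refine Ideal.span_le.mpr ?_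
        simp only [Set.singleton_subset_iff, SetLike.mem_coe]
        exact Ideal.mem_span_pair.mpr ⟨s, t, rfl⟩
  · -- fraction ring
    refine ⟨fun y => ?_, fun z => ?_, fun {x y} h => ⟨1, by rw [Subtype.ext h]⟩⟩
    · refine isUnit_iff_ne_zero.mpr fun h => nonZeroDivisors.ne_zero y.2 (Subtype.ext ?_)
      exact h
    · set f := z.num with hf
      set g := z.denom with hgd
      have hg : g ≠ 0 := z.denom_ne_zero
      have hφg : algebraMap K[X] (RatFunc K) g ≠ 0 := RatFunc.algebraMap_ne_zero hg
      obtain ⟨p, hpne, hfp, hgp, _⟩ := KFR.combine R hR f g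
      have hφp : algebraMap K[X] (RatFunc K) p ≠ 0 :=
        RatFunc.algebraMap_ne_zero (hpne hg)
      obtain ⟨u, hu⟩ := Submodule.mem_span_singleton.mp hfp
      obtain ⟨v, hv⟩ := Submodule.mem_span_singleton.mp hgp
      have hu' : (u : RatFunc K) * algebraMap K[X] (RatFunc K) p
          = algebraMap K[X] (RatFunc K) f := hu
      have hv' : (v : RatFunc K) * algebraMap K[X] (RatFunc K) p
          = algebraMap K[X] (RatFunc K) g := hv
      have hv0 : v ≠ 0 := by
        intro h
        apply hφg
        rw [← hv', h]
        push_cast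
        ring
      refine ⟨(u, ⟨v, mem_nonZeroDivisors_of_ne_zero hv0⟩), ?_⟩
      have hz : algebraMap K[X] (RatFunc K) f / algebraMap K[X] (RatFunc K) g = z := by
        rw [hf, hgd]; exact RatFunc.num_div_denom z
      show z * (v : RatFunc K) = (u : RatFunc K)
      apply mul_right_cancel₀ hφp
      rw [← hz, mul_assoc, hv', div_mul_cancel₀ _ hφg]
      exact hu'.symm
end

section
/- Let K be a field, T an indeterminate, and V a valuation domain of K with maximal ideal M. Then the trivial extension V(T) := V[T]_{M[T]} is a K-function ring, i.e., T and T^{-1} belong to V(T), and f(0) ∈ f·V(T) for every nonzero f ∈ K[T]. -/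
open scoped Polynomial

section Aux

variable {K : Type*} [Field K] (V : ValuationSubring K)

open Polynomial

/-- All coefficients have valuation ≤ 1, and some coefficient has valuation 1. -/
def GoodDenom (g : K[X]) : Prop :=
  (∀ i, V.valuation (g.coeff i) ≤ 1) ∧ ∃ i, V.valuation (g.coeff i) = 1

lemma goodDenom_iff (g : K[X]) :
    GoodDenom V g ↔ (∀ i, g.coeff i ∈ V) ∧
      ∃ i, g.coeff i ≠ 0 ∧ (g.coeff i)⁻¹ ∈ V := by
  constructor
  · rintro ⟨h1, i, hi⟩
    refine ⟨fun j => (V.valuation_le_one_iff _).1 (h1 j), i, ?_, ?_⟩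
    · intro h0
      rw [h0, map_zero] at hi
      exact zero_ne_one hi
    · rw [← V.valuation_le_one_iff, map_inv₀, hi, inv_one]
  · rintro ⟨h1, i, hi0, hi⟩
    refine ⟨fun j => (V.valuation_le_one_iff _).2 (h1 j), i, le_antisymm
      ((V.valuation_le_one_iff _).2 (h1 i)) ?_⟩
    rw [← V.valuation_le_one_iff, map_inv₀, inv_le_one₀] at hi
    · exact hi
    · simpa [zero_lt_iff] using hi0

lemma goodDenom_one : GoodDenom V (1 : K[X]) := by
  refine ⟨fun i => ?_, 0, by simp⟩
  rcases eq_or_ne i 0 with rfl | h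
  · simp
  · simp [coeff_one, h]

lemma goodDenom_ne_zero {g : K[X]} (hg : GoodDenom V g) : g ≠ 0 := by
  rintro rfl
  obtain ⟨i, hi⟩ := hg.2
  simp at hi

lemma goodDenom_mul {g₁ g₂ : K[X]} (h₁ : GoodDenom V g₁) (h₂ : GoodDenom V g₂) :
    GoodDenom V (g₁ * g₂) := by
  classical
  constructor
  · intro n
    rw [coeff_mul]
    refine Valuation.map_sum_le _ fun p _ => ?_
    calc V.valuation (g₁.coeff p.1 * g₂.coeff p.2)
        = V.valuation (g₁.coeff p.1) * V.valuation (g₂.coeff p.2) := map_mul _ _ _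
      _ ≤ 1 * 1 := mul_le_mul' (h₁.1 _) (h₂.1 _)
      _ = 1 := one_mul 1
  · have e₁ : ∃ i, V.valuation (g₁.coeff i) = 1 := h₁.2
    have e₂ : ∃ j, V.valuation (g₂.coeff j) = 1 := h₂.2
    set i := Nat.find e₁ with hi
    set j := Nat.find e₂ with hj
    have hvi : V.valuation (g₁.coeff i) = 1 := Nat.find_spec e₁
    have hvj : V.valuation (g₂.coeff j) = 1 := Nat.find_spec e₂
    refine ⟨i + j, ?_⟩
    rw [coeff_mul]
    have hmem : (i, j) ∈ Finset.HasAntidiagonal.antidiagonal (i + j) := by simp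
    rw [← Finset.add_sum_erase _ _ hmem]
    have hlt : ∀ p ∈ (Finset.HasAntidiagonal.antidiagonal (i + j)).erase (i, j),
        V.valuation (g₁.coeff p.1 * g₂.coeff p.2) < 1 := by
      rintro ⟨k, l⟩ hp
      rw [Finset.mem_erase, Finset.HasAntidiagonal.mem_antidiagonal] at hp
      have hkl : k < i ∨ l < j := by
        by_contra hc
        push_neg at hc
        have hk : k = i := by omega
        have hl : l = j := by omega
        exact hp.1 (by simp [hk, hl])
      rw [map_mul]
      rcases hkl with hk | hl
      · have h1 : V.valuation (g₁.coeff k) < 1 :=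
          lt_of_le_of_ne (h₁.1 k) (Nat.find_min e₁ hk)
        calc V.valuation (g₁.coeff k) * V.valuation (g₂.coeff l)
            ≤ V.valuation (g₁.coeff k) * 1 := mul_le_mul' le_rfl (h₂.1 l)
          _ = V.valuation (g₁.coeff k) := mul_one _
          _ < 1 := h1
      · have h2 : V.valuation (g₂.coeff l) < 1 :=
          lt_of_le_of_ne (h₂.1 l) (Nat.find_min e₂ hl)
        calc V.valuation (g₁.coeff k) * V.valuation (g₂.coeff l)
            ≤ 1 * V.valuation (g₂.coeff l) := mul_le_mul' (h₁.1 k) le_rfl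
          _ = V.valuation (g₂.coeff l) := one_mul _
          _ < 1 := h2
    rw [Valuation.map_add_eq_of_lt_left _ ?_, map_mul, hvi, hvj, one_mul]
    rw [map_mul, hvi, hvj, one_mul]
    exact Valuation.map_sum_lt _ one_ne_zero hlt

/-- All coefficients have valuation ≤ 1. -/
def GoodNum (f : K[X]) : Prop := ∀ i, V.valuation (f.coeff i) ≤ 1

lemma goodNum_mul {f₁ f₂ : K[X]} (h₁ : GoodNum V f₁) (h₂ : GoodNum V f₂) :
    GoodNum V (f₁ * f₂) := by
  intro n
  rw [Polynomial.coeff_mul]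
  refine Valuation.map_sum_le _ fun p _ => ?_
  rw [map_mul]
  calc V.valuation (f₁.coeff p.1) * V.valuation (f₂.coeff p.2)
      ≤ 1 * 1 := mul_le_mul' (h₁ _) (h₂ _)
    _ = 1 := one_mul 1

lemma goodNum_add {f₁ f₂ : K[X]} (h₁ : GoodNum V f₁) (h₂ : GoodNum V f₂) :
    GoodNum V (f₁ + f₂) := by
  intro n
  rw [Polynomial.coeff_add]
  exact le_trans (Valuation.map_add _ _ _) (max_le (h₁ n) (h₂ n))

lemma mem_trivialExtSet_iff (h : RatFunc K) :
    h ∈ trivialExtSet V ↔ ∃ f g : K[X], GoodNum V f ∧ GoodDenom V g ∧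
      h = algebraMap K[X] (RatFunc K) f / algebraMap K[X] (RatFunc K) g := by
  constructor
  · rintro ⟨f, g, hf, hg, hgu, rfl⟩
    exact ⟨f, g, fun i => (V.valuation_le_one_iff _).2 (hf i),
      (goodDenom_iff V g).2 ⟨hg, hgu⟩, rfl⟩
  · rintro ⟨f, g, hf, hg, rfl⟩
    obtain ⟨hg1, hg2⟩ := (goodDenom_iff V g).1 hg
    exact ⟨f, g, fun i => (V.valuation_le_one_iff _).1 (hf i), hg1, hg2, rfl⟩

lemma trivialExtSet_one_mem : (1 : RatFunc K) ∈ trivialExtSet V := by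
  refine (mem_trivialExtSet_iff V _).2 ⟨1, 1, fun i => ?_, goodDenom_one V, by simp⟩
  rcases eq_or_ne i 0 with rfl | h
  · simp
  · simp [coeff_one, h]

lemma trivialExtSet_zero_mem : (0 : RatFunc K) ∈ trivialExtSet V := by
  exact (mem_trivialExtSet_iff V _).2 ⟨0, 1, fun i => by simp, goodDenom_one V, by simp⟩

lemma trivialExtSet_mul_mem {a b : RatFunc K} (ha : a ∈ trivialExtSet V)
    (hb : b ∈ trivialExtSet V) : a * b ∈ trivialExtSet V := by
  obtain ⟨f₁, g₁, hf₁, hg₁, rfl⟩ := (mem_trivialExtSet_iff V _).1 ha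
  obtain ⟨f₂, g₂, hf₂, hg₂, rfl⟩ := (mem_trivialExtSet_iff V _).1 hb
  refine (mem_trivialExtSet_iff V _).2 ⟨f₁ * f₂, g₁ * g₂, goodNum_mul V hf₁ hf₂,
    goodDenom_mul V hg₁ hg₂, ?_⟩
  rw [map_mul, map_mul, div_mul_div_comm]

lemma trivialExtSet_neg_mem {a : RatFunc K} (ha : a ∈ trivialExtSet V) :
    -a ∈ trivialExtSet V := by
  obtain ⟨f, g, hf, hg, rfl⟩ := (mem_trivialExtSet_iff V _).1 ha
  refine (mem_trivialExtSet_iff V _).2 ⟨-f, g, fun i => ?_, hg, by rw [map_neg, neg_div]⟩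
  rw [coeff_neg, Valuation.map_neg]
  exact hf i

lemma trivialExtSet_add_mem {a b : RatFunc K} (ha : a ∈ trivialExtSet V)
    (hb : b ∈ trivialExtSet V) : a + b ∈ trivialExtSet V := by
  obtain ⟨f₁, g₁, hf₁, hg₁, rfl⟩ := (mem_trivialExtSet_iff V _).1 ha
  obtain ⟨f₂, g₂, hf₂, hg₂, rfl⟩ := (mem_trivialExtSet_iff V _).1 hb
  refine (mem_trivialExtSet_iff V _).2 ⟨f₁ * g₂ + f₂ * g₁, g₁ * g₂,
    goodNum_add V (goodNum_mul V hf₁ hg₂.1) (goodNum_mul V hf₂ hg₁.1),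
    goodDenom_mul V hg₁ hg₂, ?_⟩
  have h₁ : algebraMap K[X] (RatFunc K) g₁ ≠ 0 :=
    RatFunc.algebraMap_ne_zero (goodDenom_ne_zero V hg₁)
  have h₂ : algebraMap K[X] (RatFunc K) g₂ ≠ 0 :=
    RatFunc.algebraMap_ne_zero (goodDenom_ne_zero V hg₂)
  field_simp
  simp only [map_mul, map_add]
  ring

end Aux

/-- For a valuation domain `V` of `K`, the trivial extension `V(T) = V[T]_{M[T]}` is a
`K`-function ring: it is a subring of `K(T)` containing `T` and `T⁻¹` such that
`f(0) ∈ f·V(T)` for every nonzero `f ∈ K[T]`. -/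
theorem trivialExt_isKFunctionRing {K : Type*} [Field K] (V : ValuationSubring K) :
    ∃ R : Subring (RatFunc K), (R : Set (RatFunc K)) = trivialExtSet V ∧
      IsKFunctionRing R := by
  classical
  refine ⟨{ carrier := trivialExtSet V
            one_mem' := trivialExtSet_one_mem V
            mul_mem' := trivialExtSet_mul_mem V
            zero_mem' := trivialExtSet_zero_mem V
            add_mem' := trivialExtSet_add_mem V
            neg_mem' := trivialExtSet_neg_mem V }, rfl, ?_, ?_, ?_⟩
  · exact (mem_trivialExtSet_iff V _).2 ⟨Polynomial.X, 1, fun i => by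
      rcases eq_or_ne i 1 with rfl | h
      · simp
      · simp [Polynomial.coeff_X, Ne.symm h], goodDenom_one V, by simp⟩
  · refine (mem_trivialExtSet_iff V _).2 ⟨1, Polynomial.X, fun i => ?_, ?_, ?_⟩
    · rcases eq_or_ne i 0 with rfl | h
      · simp
      · simp [Polynomial.coeff_one, h]
    · refine ⟨fun i => ?_, 1, by simp⟩
      rcases eq_or_ne i 1 with rfl | h
      · simp
      · simp [Polynomial.coeff_X, Ne.symm h]
    · rw [map_one, RatFunc.algebraMap_X, one_div]
  · intro f hf
    obtain ⟨i₀, hi₀s, hi₀max⟩ := Finset.exists_max_image f.support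
      (fun i => V.valuation (f.coeff i)) (Polynomial.support_nonempty.2 hf)
    set a : K := f.coeff i₀ with ha_def
    have ha0 : a ≠ 0 := Polynomial.mem_support_iff.1 hi₀s
    have hva : V.valuation a ≠ 0 := by simpa [Valuation.zero_iff] using ha0
    have hmax : ∀ i, V.valuation (f.coeff i) ≤ V.valuation a := by
      intro i
      by_cases hi : i ∈ f.support
      · exact hi₀max i hi
      · rw [Polynomial.notMem_support_iff.1 hi, map_zero]
        exact zero_le'
    have hNum : GoodNum V (Polynomial.C (f.coeff 0 * a⁻¹)) := by
      intro i
      rcases eq_or_ne i 0 with rfl | h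
      · rw [Polynomial.coeff_C_zero, map_mul, map_inv₀]
        calc V.valuation (f.coeff 0) * (V.valuation a)⁻¹
            ≤ V.valuation a * (V.valuation a)⁻¹ := mul_le_mul_left (hmax 0) _
          _ = 1 := mul_inv_cancel₀ hva
      · simp [Polynomial.coeff_C, h]
    have hDen : GoodDenom V (Polynomial.C a⁻¹ * f) := by
      constructor
      · intro i
        rw [Polynomial.coeff_C_mul, map_mul, map_inv₀, mul_comm]
        calc V.valuation (f.coeff i) * (V.valuation a)⁻¹
            ≤ V.valuation a * (V.valuation a)⁻¹ := mul_le_mul_left (hmax i) _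
          _ = 1 := mul_inv_cancel₀ hva
      · refine ⟨i₀, ?_⟩
        rw [Polynomial.coeff_C_mul, map_mul, map_inv₀, ← ha_def,
          mul_comm, mul_inv_cancel₀ hva]
    have hD0 : algebraMap K[X] (RatFunc K) (Polynomial.C a⁻¹ * f) ≠ 0 :=
      RatFunc.algebraMap_ne_zero (mul_ne_zero (by simpa using inv_ne_zero ha0) hf)
    refine ⟨algebraMap K[X] (RatFunc K) (Polynomial.C (f.coeff 0 * a⁻¹)) /
      algebraMap K[X] (RatFunc K) (Polynomial.C a⁻¹ * f),
      (mem_trivialExtSet_iff V _).2 ⟨_, _, hNum, hDen, rfl⟩, ?_⟩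
    rw [mul_div_assoc', eq_div_iff hD0, RatFunc.algebraMap_eq_C,
      ← RatFunc.algebraMap_C, ← map_mul, ← map_mul]
    congr 1
    rw [Polynomial.C_mul]
    ring
end

section
/- Let K be a field, T an indeterminate, and R a K-function ring in K(T). Then every valuation overring W of R in K(T) is of the form W = (W ∩ K)(T), i.e., W is the trivial extension to K(T) of the valuation domain W ∩ K of K. -/
open scoped Polynomial

open Polynomial

private lemma algC {K : Type*} [Field K] (a : K) :
    algebraMap K[X] (RatFunc K) (C a) = algebraMap K (RatFunc K) a := by
  rw [IsScalarTower.algebraMap_apply K K[X] (RatFunc K), Polynomial.algebraMap_eq]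

private lemma div_aux1 {F : Type*} [Field F] {A P Q x : F} (hP : P ≠ 0) (hx : x ≠ 0)
    (h : x * Q + A = P) : Q / P = x⁻¹ * (1 - A / P) := by
  field_simp
  linear_combination h

private lemma div_aux2 {F : Type*} [Field F] {a P Q : F} (hQ : Q ≠ 0) :
    a / P = a / Q * (Q / P) := by
  rw [div_mul_div_comm, mul_comm Q P, mul_div_mul_right _ _ hQ]

private lemma div_aux3 {F : Type*} [Field F] {a c f g : F} (hf : f ≠ 0) (hg : g ≠ 0) :
    a / f * (f / g) * (c⁻¹ * g) = a * c⁻¹ := by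
  field_simp

private lemma div_aux4 {F : Type*} [Field F] {a g c : F} (hc : c ≠ 0) :
    a / g = a * (c⁻¹ * (c / g)) := by
  rw [div_eq_mul_inv c g, (mul_assoc c⁻¹ c g⁻¹).symm, inv_mul_cancel₀ hc, one_mul,
    ← div_eq_mul_inv]

private lemma polyMem {K : Type*} [Field K] {W : ValuationSubring (RatFunc K)}
    (hX : (RatFunc.X : RatFunc K) ∈ W) (p : K[X])
    (hp : ∀ i, algebraMap K (RatFunc K) (p.coeff i) ∈ W) :
    algebraMap K[X] (RatFunc K) p ∈ W := by
  have hrep : algebraMap K[X] (RatFunc K) p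
      = ∑ i ∈ p.support, algebraMap K (RatFunc K) (p.coeff i) * RatFunc.X ^ i := by
    conv_lhs => rw [p.as_sum_support]
    rw [map_sum]
    refine Finset.sum_congr rfl fun i _ => ?_
    rw [← Polynomial.C_mul_X_pow_eq_monomial, map_mul, map_pow, algC, RatFunc.algebraMap_X]
  rw [hrep]
  exact Subring.sum_mem _ fun i _ => mul_mem (hp i) (pow_mem hX i)

private lemma coeff_div_mem {K : Type*} [Field K] {W : ValuationSubring (RatFunc K)}
    (hXinv : (RatFunc.X : RatFunc K)⁻¹ ∈ W)
    (h0 : ∀ p : K[X], p ≠ 0 →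
      algebraMap K (RatFunc K) (p.coeff 0) / algebraMap K[X] (RatFunc K) p ∈ W)
    (i : ℕ) : ∀ p : K[X], p ≠ 0 →
      algebraMap K (RatFunc K) (p.coeff i) / algebraMap K[X] (RatFunc K) p ∈ W := by
  induction i with
  | zero => exact h0
  | succ i ih =>
    intro p hp
    by_cases hq : p.divX = 0
    · have : p.coeff (i + 1) = 0 := by
        rw [← Polynomial.coeff_divX, hq, Polynomial.coeff_zero]
      simp [this, zero_mem]
    · have hP : algebraMap K[X] (RatFunc K) p ≠ 0 := RatFunc.algebraMap_ne_zero hp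
      have hQ : algebraMap K[X] (RatFunc K) p.divX ≠ 0 := RatFunc.algebraMap_ne_zero hq
      have heq : RatFunc.X * algebraMap K[X] (RatFunc K) p.divX
          + algebraMap K (RatFunc K) (p.coeff 0) = algebraMap K[X] (RatFunc K) p := by
        rw [← RatFunc.algebraMap_X, ← algC, ← map_mul, ← map_add, Polynomial.X_mul_divX_add]
      have hQP : algebraMap K[X] (RatFunc K) p.divX / algebraMap K[X] (RatFunc K) p ∈ W := by
        rw [div_aux1 hP RatFunc.X_ne_zero heq]
        exact mul_mem hXinv (sub_mem (one_mem W) (h0 p hp))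
      have key : algebraMap K (RatFunc K) (p.coeff (i + 1)) / algebraMap K[X] (RatFunc K) p
          = (algebraMap K (RatFunc K) (p.divX.coeff i) / algebraMap K[X] (RatFunc K) p.divX)
            * (algebraMap K[X] (RatFunc K) p.divX / algebraMap K[X] (RatFunc K) p) := by
        rw [Polynomial.coeff_divX]
        exact div_aux2 hQ
      rw [key]
      exact mul_mem (ih p.divX hq) hQP


/-- Every valuation overring `W` of a `K`-function ring `R` in `K(T)` is the trivial
extension of the valuation domain `W ∩ K` of `K`, i.e. `W = (W ∩ K)(T)`. -/
theorem valuation_overring_of_kFunctionRing {K : Type*} [Field K]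
    (R : Subring (RatFunc K)) (hR : IsKFunctionRing R)
    (W : ValuationSubring (RatFunc K)) (hW : (R : Set (RatFunc K)) ⊆ W) :
    (W : Set (RatFunc K)) = trivialExtSet (W.comap (algebraMap K (RatFunc K))) := by
  obtain ⟨hX, hXinv, hdiv⟩ := hR
  have hXW : (RatFunc.X : RatFunc K) ∈ W := hW hX
  have hXinvW : (RatFunc.X : RatFunc K)⁻¹ ∈ W := hW hXinv
  set V := W.comap (algebraMap K (RatFunc K)) with hVdef
  have hmemV : ∀ x : K, x ∈ V ↔ algebraMap K (RatFunc K) x ∈ W := fun x =>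
    ValuationSubring.mem_comap
  have h0 : ∀ p : K[X], p ≠ 0 →
      algebraMap K (RatFunc K) (p.coeff 0) / algebraMap K[X] (RatFunc K) p ∈ W := by
    intro p hp
    obtain ⟨r, hr, hre⟩ := hdiv p hp
    have hP : algebraMap K[X] (RatFunc K) p ≠ 0 := RatFunc.algebraMap_ne_zero hp
    rw [hre, mul_div_cancel_left₀ r hP]
    exact hW hr
  have lemA := coeff_div_mem hXinvW h0
  ext h
  simp only [SetLike.mem_coe, trivialExtSet, Set.mem_setOf_eq]
  constructor
  · intro hh
    have hg0 : h.denom ≠ 0 := h.denom_ne_zero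
    have hG : algebraMap K[X] (RatFunc K) h.denom ≠ 0 := RatFunc.algebraMap_ne_zero hg0
    obtain ⟨j, hjs, hjmax⟩ := h.denom.support.exists_max_image
      (fun i => V.valuation (h.denom.coeff i)) (Polynomial.support_nonempty.mpr hg0)
    set c := h.denom.coeff j with hcdef
    have hc0 : c ≠ 0 := Polynomial.mem_support_iff.mp hjs
    have hcpos : (0 : V.ValueGroup) < V.valuation c := by
      rw [zero_lt_iff]; exact (Valuation.ne_zero_iff _).mpr hc0
    have hcV : ∀ a : K, V.valuation a ≤ V.valuation c → a / c ∈ V := by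
      intro a ha
      rw [← ValuationSubring.valuation_le_one_iff, Valuation.map_div]
      exact (div_le_one₀ hcpos).mpr ha
    have hgc : ∀ i, c⁻¹ * h.denom.coeff i ∈ V := by
      intro i
      by_cases hi : h.denom.coeff i = 0
      · rw [hi, mul_zero]; exact zero_mem _
      · rw [mul_comm, ← div_eq_mul_inv]
        exact hcV _ (hjmax i (Polynomial.mem_support_iff.mpr hi))
    have hGc : algebraMap K[X] (RatFunc K) (C c⁻¹ * h.denom) ∈ W :=
      polyMem hXW _ fun i => by
        rw [Polynomial.coeff_C_mul]; exact (hmemV _).mp (hgc i)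
    have hfc : ∀ i, c⁻¹ * h.num.coeff i ∈ V := by
      intro i
      by_cases hfi : h.num.coeff i = 0
      · rw [hfi, mul_zero]; exact zero_mem _
      · have hf0 : h.num ≠ 0 := fun hf => hfi (by rw [hf, Polynomial.coeff_zero])
        have hF : algebraMap K[X] (RatFunc K) h.num ≠ 0 := RatFunc.algebraMap_ne_zero hf0
        have hmem : algebraMap K (RatFunc K) (h.num.coeff i)
              / algebraMap K[X] (RatFunc K) h.num * h
              * algebraMap K[X] (RatFunc K) (C c⁻¹ * h.denom) ∈ W :=
          mul_mem (mul_mem (lemA i h.num hf0) hh) hGc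
        have hGid : algebraMap K[X] (RatFunc K) (C c⁻¹ * h.denom)
            = (algebraMap K (RatFunc K) c)⁻¹ * algebraMap K[X] (RatFunc K) h.denom := by
          rw [map_mul, algC, map_inv₀]
        have heq := div_aux3 (a := algebraMap K (RatFunc K) (h.num.coeff i))
          (c := algebraMap K (RatFunc K) c) hF hG
        rw [h.num_div_denom, ← hGid] at heq
        rw [hmemV, map_mul, map_inv₀, mul_comm, ← heq]
        exact hmem
    refine ⟨C c⁻¹ * h.num, C c⁻¹ * h.denom, ?_, ?_, ⟨j, ?_, ?_⟩, ?_⟩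
    · intro i; rw [Polynomial.coeff_C_mul]; exact hfc i
    · intro i; rw [Polynomial.coeff_C_mul]; exact hgc i
    · rw [Polynomial.coeff_C_mul, ← hcdef, inv_mul_cancel₀ hc0]; exact one_ne_zero
    · rw [Polynomial.coeff_C_mul, ← hcdef, inv_mul_cancel₀ hc0, inv_one]; exact one_mem _
    · have he : algebraMap K[X] (RatFunc K) (C c⁻¹) ≠ 0 := by
        exact RatFunc.algebraMap_ne_zero (Polynomial.C_ne_zero.mpr (inv_ne_zero hc0))
      rw [map_mul, map_mul, mul_div_mul_left _ _ he, h.num_div_denom]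
  · rintro ⟨f, g, hf, hg, ⟨i, hgi, hgiinv⟩, rfl⟩
    have hg0 : g ≠ 0 := fun hgg => hgi (by rw [hgg, Polynomial.coeff_zero])
    have hF : algebraMap K[X] (RatFunc K) f ∈ W :=
      polyMem hXW f fun k => (hmemV _).mp (hf k)
    have hcne : algebraMap K (RatFunc K) (g.coeff i) ≠ 0 := by
      rw [← algC]
      exact RatFunc.algebraMap_ne_zero (Polynomial.C_ne_zero.mpr hgi)
    rw [div_aux4 hcne]
    refine mul_mem hF (mul_mem ?_ (lemA i g hg0))
    rw [← map_inv₀]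
    exact (hmemV _).mp hgiinv
end

section
/- Let K be a field, T an indeterminate, and R a subring of K(T). Then R is a K-function ring if and only if R is integrally closed in K(T) and every valuation overring of R in K(T) equals V(T) for some valuation domain V of K. -/
open scoped Polynomial

section Auxiliary

open Polynomial

variable {K : Type*} [Field K]

theorem alg_mem_of_coeff_mem (S : Subring (RatFunc K)) (hX : RatFunc.X ∈ S) (f : K[X])
    (h : ∀ j, algebraMap K (RatFunc K) (f.coeff j) ∈ S) :
    algebraMap K[X] (RatFunc K) f ∈ S := by
  rw [f.as_sum_support, map_sum]
  refine Subring.sum_mem _ fun j hj => ?_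
  rw [← Polynomial.C_mul_X_pow_eq_monomial, map_mul, map_pow, RatFunc.algebraMap_C,
    RatFunc.algebraMap_X]
  exact Subring.mul_mem _ (by rw [← RatFunc.algebraMap_eq_C]; exact h j) (Subring.pow_mem _ hX j)

theorem coeff_mem_mul {R : Subring (RatFunc K)} (hR : IsKFunctionRing R) :
    ∀ (i : ℕ) (f : K[X]), f ≠ 0 → ∃ r ∈ R,
      algebraMap K (RatFunc K) (f.coeff i) = algebraMap K[X] (RatFunc K) f * r := by
  obtain ⟨hX, hXi, hax⟩ := hR
  intro i
  induction i with
  | zero => exact hax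
  | succ i ih =>
    intro f hf
    by_cases hd : f.divX = 0
    · refine ⟨0, Subring.zero_mem R, ?_⟩
      have : f.coeff (i+1) = 0 := by
        rw [← f.coeff_divX, hd, Polynomial.coeff_zero]
      simp [this]
    · obtain ⟨r₁, hr₁, he₁⟩ := ih f.divX hd
      obtain ⟨r₀, hr₀, he₀⟩ := hax f hf
      refine ⟨(1 - r₀) * (RatFunc.X : RatFunc K)⁻¹ * r₁,
        R.mul_mem (R.mul_mem (R.sub_mem R.one_mem hr₀) hXi) hr₁, ?_⟩
      have hXne : (RatFunc.X : RatFunc K) ≠ 0 := RatFunc.X_ne_zero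
      have hdecomp : algebraMap K[X] (RatFunc K) f.divX * RatFunc.X
          + algebraMap K (RatFunc K) (f.coeff 0) = algebraMap K[X] (RatFunc K) f := by
        rw [RatFunc.algebraMap_eq_C, ← RatFunc.algebraMap_C, ← RatFunc.algebraMap_X, ← map_mul,
          ← map_add, f.divX_mul_X_add]
      have hd1 : algebraMap K[X] (RatFunc K) f.divX
          = algebraMap K[X] (RatFunc K) f * (1 - r₀) * (RatFunc.X : RatFunc K)⁻¹ := by
        field_simp
        rw [mul_sub, mul_one, ← he₀, ← hdecomp]
        ring
      rw [← f.coeff_divX, he₁, hd1]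
      ring

theorem exists_factor {R : Subring (RatFunc K)} (hX : RatFunc.X ∈ R) (h p : K[X])
    (hp : ∀ j, ∃ r ∈ R, algebraMap K (RatFunc K) (p.coeff j)
      = algebraMap K[X] (RatFunc K) h * r) :
    ∃ s ∈ R, algebraMap K[X] (RatFunc K) p = algebraMap K[X] (RatFunc K) h * s := by
  choose r hr he using hp
  refine ⟨∑ j ∈ p.support, r j * RatFunc.X ^ j,
    R.sum_mem fun j _ => R.mul_mem (hr j) (R.pow_mem hX j), ?_⟩
  rw [Finset.mul_sum]
  conv_lhs => rw [p.as_sum_support, map_sum]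
  refine Finset.sum_congr rfl fun j _ => ?_
  rw [← Polynomial.C_mul_X_pow_eq_monomial, map_mul, map_pow, RatFunc.algebraMap_C,
    RatFunc.algebraMap_X, ← RatFunc.algebraMap_eq_C, he j, mul_assoc]

theorem kfr_integrally_closed {R : Subring (RatFunc K)} (hR : IsKFunctionRing R)
    (x : RatFunc K) (hx : R.subtype.IsIntegralElem x) : x ∈ R := by
  obtain ⟨hXR, hXiR, hax⟩ := hR
  by_cases hx0 : x = 0
  · exact hx0 ▸ R.zero_mem
  obtain ⟨P, hPm, hP0⟩ := hx
  set p := x.num with hpdef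
  set q := x.denom with hqdef
  have hq : q ≠ 0 := x.denom_ne_zero
  have hp : p ≠ 0 := RatFunc.num_ne_zero hx0
  set m := p.natDegree + 1 with hmdef
  set h := p + q * Polynomial.X ^ m with hhdef
  have hcoeff_high : ∀ j, m ≤ j → h.coeff j = q.coeff (j - m) := by
    intro j hj
    rw [hhdef, Polynomial.coeff_add, Polynomial.coeff_mul_X_pow', if_pos hj,
      Polynomial.coeff_eq_zero_of_natDegree_lt (by omega), zero_add]
  have hcoeff_low : ∀ j, j < m → h.coeff j = p.coeff j := by
    intro j hj
    rw [hhdef, Polynomial.coeff_add, Polynomial.coeff_mul_X_pow', if_neg (by omega), add_zero]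
  have hh : h ≠ 0 := by
    intro h0
    have := hcoeff_high (q.natDegree + m) (by omega)
    rw [h0, Polynomial.coeff_zero] at this
    exact hq (Polynomial.leadingCoeff_eq_zero.mp (by simp at this; exact this.symm))
  have hhne : algebraMap K[X] (RatFunc K) h ≠ 0 := RatFunc.algebraMap_ne_zero hh
  have hXne : (RatFunc.X : RatFunc K) ≠ 0 := RatFunc.X_ne_zero
  -- get s
  obtain ⟨s, hsR, hs⟩ := exists_factor hXR h p (fun j => by
    by_cases hj : j < m
    · rw [← hcoeff_low j hj]; exact coeff_mem_mul ⟨hXR, hXiR, hax⟩ j h hh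
    · exact ⟨0, R.zero_mem, by
        rw [Polynomial.coeff_eq_zero_of_natDegree_lt (by omega)]; simp⟩)
  -- the key algebraic identity
  have hkey : algebraMap K[X] (RatFunc K) h
      = algebraMap K[X] (RatFunc K) p + algebraMap K[X] (RatFunc K) q * RatFunc.X ^ m := by
    rw [hhdef, map_add, map_mul, map_pow, RatFunc.algebraMap_X]
  set t : RatFunc K := (1 - s) * ((RatFunc.X : RatFunc K)⁻¹) ^ m with htdef
  have htR : t ∈ R := R.mul_mem (R.sub_mem R.one_mem hsR) (R.pow_mem hXiR m)
  have hXm : (RatFunc.X : RatFunc K) ^ m ≠ 0 := pow_ne_zero _ hXne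
  have ht : algebraMap K[X] (RatFunc K) q = algebraMap K[X] (RatFunc K) h * t := by
    have e : algebraMap K[X] (RatFunc K) q * RatFunc.X ^ m
        = algebraMap K[X] (RatFunc K) h * (1 - s) := by
      rw [mul_sub, mul_one, ← hs]
      linear_combination -hkey
    calc algebraMap K[X] (RatFunc K) q
        = algebraMap K[X] (RatFunc K) q * RatFunc.X ^ m * (RatFunc.X ^ m)⁻¹ := by
          field_simp
      _ = algebraMap K[X] (RatFunc K) h * (1 - s) * (RatFunc.X ^ m)⁻¹ := by rw [e]
      _ = algebraMap K[X] (RatFunc K) h * t := by rw [htdef, inv_pow]; ring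
  have hst : s + RatFunc.X ^ m * t = 1 := by
    have : algebraMap K[X] (RatFunc K) h * (s + RatFunc.X ^ m * t)
        = algebraMap K[X] (RatFunc K) h * 1 := by
      rw [mul_one, mul_add, ← hs]
      nth_rewrite 2 [hkey]
      rw [ht]; ring
    exact mul_left_cancel₀ hhne this
  have htne : t ≠ 0 := by
    intro h0
    exact RatFunc.algebraMap_ne_zero hq (by rw [ht, h0, mul_zero])
  have hxst : x = s / t := by
    rw [← RatFunc.num_div_denom x, ← hpdef, ← hqdef, hs, ht,
      mul_div_mul_left _ _ hhne]
  set n := P.natDegree with hndef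
  have hsum : ∑ i ∈ Finset.range (n + 1), R.subtype (P.coeff i) * s ^ i * t ^ (n - i) = 0 := by
    have h0 : ∑ i ∈ Finset.range (n + 1), R.subtype (P.coeff i) * x ^ i = 0 := by
      rw [← Polynomial.eval₂_eq_sum_range]; exact hP0
    calc ∑ i ∈ Finset.range (n + 1), R.subtype (P.coeff i) * s ^ i * t ^ (n - i)
        = ∑ i ∈ Finset.range (n + 1), R.subtype (P.coeff i) * x ^ i * t ^ n := by
          refine Finset.sum_congr rfl fun i hi => ?_
          have hin : i ≤ n := by simpa using Nat.lt_succ_iff.mp (Finset.mem_range.mp hi)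
          rw [hxst, div_pow, pow_sub₀ t htne hin]
          field_simp
      _ = (∑ i ∈ Finset.range (n + 1), R.subtype (P.coeff i) * x ^ i) * t ^ n := by
          rw [Finset.sum_mul]
      _ = 0 := by rw [h0, zero_mul]
  set c : RatFunc K := -∑ i ∈ Finset.range n, R.subtype (P.coeff i) * s ^ i * t ^ (n - 1 - i)
    with hcdef
  have hcR : c ∈ R := R.neg_mem (R.sum_mem fun i _ =>
    R.mul_mem (R.mul_mem (SetLike.coe_mem _) (R.pow_mem hsR i)) (R.pow_mem htR _))
  have hsc : s ^ n = t * c := by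
    rw [Finset.sum_range_succ] at hsum
    have hco : P.coeff n = 1 := hPm
    rw [hco] at hsum
    simp only [map_one, one_mul, Nat.sub_self, pow_zero, mul_one] at hsum
    have e1 : s ^ n = -∑ i ∈ Finset.range n, R.subtype (P.coeff i) * s ^ i * t ^ (n - i) :=
      eq_neg_of_add_eq_zero_right hsum
    rw [e1, hcdef, mul_neg, Finset.mul_sum]
    refine neg_inj.mpr (Finset.sum_congr rfl fun i hi => ?_)
    have hni : n - i = (n - 1 - i) + 1 := by
      have := Finset.mem_range.mp hi; omega
    rw [hni, pow_succ]
    ring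
  set G : RatFunc K := ∑ i ∈ Finset.range n, s ^ i with hGdef
  have hGR : G ∈ R := R.sum_mem fun i _ => R.pow_mem hsR i
  have hG : 1 - s ^ n = (1 - s) * G := by
    have := geom_sum_mul s n
    rw [hGdef]
    linear_combination this
  have h1s : 1 - s = RatFunc.X ^ m * t := by linear_combination -hst
  have hone : 1 = t * (c + RatFunc.X ^ m * G) := by
    linear_combination hsc + hG + G * h1s
  have htinv : t⁻¹ = c + RatFunc.X ^ m * G :=
    inv_eq_of_mul_eq_one_right hone.symm
  have : x = s * t⁻¹ := by rw [hxst, div_eq_mul_inv]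
  rw [this, htinv]
  exact R.mul_mem hsR (R.add_mem hcR (R.mul_mem (R.pow_mem hXR m) hGR))

theorem isIntegralElem_of_forall_valuationSubring {F : Type*} [Field F] (R : Subring F) (x : F)
    (hx : ∀ W : ValuationSubring F, (R : Set F) ⊆ W → x ∈ W) :
    R.subtype.IsIntegralElem x := by
  by_cases hx0 : x = 0
  · exact ⟨Polynomial.X, Polynomial.monic_X, by simp [hx0]⟩
  set y := x⁻¹ with hydef
  have hyne : y ≠ 0 := inv_ne_zero hx0
  set A : Subring F := (Algebra.adjoin (↥R) ({y} : Set F)).toSubring with hAdef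
  have hyA : y ∈ A := Algebra.subset_adjoin rfl
  have hRA : (R : Set F) ⊆ A := by
    intro r hr
    exact (Algebra.adjoin (↥R) ({y} : Set F)).algebraMap_mem ⟨r, hr⟩
  by_cases hyu : IsUnit (⟨y, hyA⟩ : A)
  · -- y is a unit of A, so x ∈ A = adjoin R {x⁻¹}, hence x is integral over R
    obtain ⟨u, hu⟩ := hyu
    have hxA : x ∈ A := by
      have h1 : (u.val : F) * ((u⁻¹).val : F) = 1 := by
        rw [← Subring.coe_mul, u.mul_inv, Subring.coe_one]
      have h2 : ((u⁻¹).val : F) = x := by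
        have h3 : (u.val : F) = y := by rw [hu]
        rw [h3, hydef, inv_mul_eq_div, div_eq_one_iff_eq hx0] at h1
        exact h1
      exact h2 ▸ (u⁻¹).val.2
    have : x ∈ (Polynomial.aeval y : _ →ₐ[↥R] F).range := by
      rw [← Algebra.adjoin_singleton_eq_range_aeval]
      exact hxA
    obtain ⟨P, hP⟩ := this
    have hP' : (Polynomial.aeval y) P = x := hP
    set d := P.natDegree with hddef
    refine ⟨Polynomial.X ^ (d + 1)
      - ∑ i ∈ Finset.range (d + 1), Polynomial.C (P.coeff i) * Polynomial.X ^ (d - i),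
      Polynomial.monic_X_pow_sub ?_, ?_⟩
    · refine lt_of_le_of_lt (Polynomial.degree_sum_le _ _) ?_
      rw [Finset.sup_lt_iff (by exact_mod_cast WithBot.bot_lt_coe (d+1))]
      intro i hi
      refine lt_of_le_of_lt (Polynomial.degree_C_mul_X_pow_le _ _) ?_
      exact_mod_cast Nat.lt_succ_of_le (Nat.sub_le d i)
    · have hsum : x = ∑ i ∈ Finset.range (d + 1), R.subtype (P.coeff i) * y ^ i := by
        rw [← hP', Polynomial.aeval_def, Polynomial.eval₂_eq_sum_range]
        rfl
      have hxs : x ^ (d + 1)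
          = ∑ i ∈ Finset.range (d + 1), R.subtype (P.coeff i) * x ^ (d - i) := by
        calc x ^ (d + 1) = x * x ^ d := by ring
          _ = (∑ i ∈ Finset.range (d + 1), R.subtype (P.coeff i) * y ^ i) * x ^ d := by
              rw [← hsum]
          _ = ∑ i ∈ Finset.range (d + 1), R.subtype (P.coeff i) * x ^ (d - i) := by
              rw [Finset.sum_mul]
              refine Finset.sum_congr rfl fun i hi => ?_
              have hid : i ≤ d := Nat.lt_succ_iff.mp (Finset.mem_range.mp hi)
              rw [hydef, pow_sub₀ x hx0 hid, inv_pow]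
              field_simp
      simp only [Polynomial.eval₂_sub, Polynomial.eval₂_pow, Polynomial.eval₂_X,
        Polynomial.eval₂_finset_sum, Polynomial.eval₂_mul, Polynomial.eval₂_C]
      rw [← hxs]
      ring
  · -- y is not a unit of A: find a valuation ring avoiding x, contradiction
    exfalso
    have hsp : Ideal.span {(⟨y, hyA⟩ : A)} ≠ ⊤ := by
      rwa [Ne, Ideal.span_singleton_eq_top]
    obtain ⟨M, hM, hsple⟩ := Ideal.exists_le_maximal _ hsp
    haveI := hM.isPrime
    have hyM : (⟨y, hyA⟩ : A) ∈ M := hsple (Ideal.subset_span rfl)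
    obtain ⟨W, hW⟩ := (LocalSubring.ofPrime A M).exists_le_valuationSubring
    have hAW : (A : Set F) ⊆ W.toLocalSubring.toSubring :=
      fun a ha => hW.1 (LocalSubring.le_ofPrime A M ha)
    have hxW : x ∈ W := hx W fun r hr => hAW (hRA hr)
    have hyW : y ∈ W.toLocalSubring.toSubring := hAW hyA
    -- y is a unit in W since x ∈ W and x * y = 1
    have hyuW : IsUnit (⟨y, hyW⟩ : W.toLocalSubring.toSubring) := by
      refine IsUnit.of_mul_eq_one ⟨x, hxW⟩ ?_
      ext
      show y * x = 1
      rw [hydef, inv_mul_cancel₀ hx0]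
    -- but y is a nonunit in the localization, and W dominates it
    have hyOP : y ∈ (LocalSubring.ofPrime A M).toSubring := LocalSubring.le_ofPrime A M hyA
    have : IsUnit (⟨y, hyOP⟩ : (LocalSubring.ofPrime A M).toSubring) := by
      have := hW.2
      exact this.1 _ (by convert hyuW <;> rfl)
    rw [show (⟨y, hyOP⟩ : (LocalSubring.ofPrime A M).toSubring)
        = algebraMap A (LocalSubring.ofPrime A M).toSubring ⟨y, hyA⟩ from rfl,
      IsLocalization.AtPrime.isUnit_to_map_iff _ M] at this
    exact this hyM

theorem inv_mem_of_isUnit_sub {F : Type*} [Field F] (W : ValuationSubring F) {a : F}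
    (ha : a ∈ W) (hu : IsUnit (⟨a, ha⟩ : W)) : a⁻¹ ∈ W := by
  by_cases ha0 : a = 0
  · simp [ha0, W.zero_mem]
  obtain ⟨u, hu⟩ := hu
  have h1 : ((u⁻¹ : Wˣ) : W).1 * a = 1 := by
    have := u.inv_mul
    rw [hu] at this
    exact congrArg Subtype.val this
  rw [inv_eq_of_mul_eq_one_left h1]
  exact ((u⁻¹ : Wˣ) : W).2

theorem inv_one_add_mem {F : Type*} [Field F] (W : ValuationSubring F) {m : F}
    (hm : m ∈ W) (hmi : m⁻¹ ∉ W) : (1 + m)⁻¹ ∈ W := by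
  have hm0 : m ≠ 0 := fun h => hmi (by simp [h, W.zero_mem])
  by_contra h
  have ha : (1 : F) + m ∈ W := W.add_mem _ _ W.one_mem hm
  have hna : ¬IsUnit (⟨1 + m, ha⟩ : W) := fun hu => h (inv_mem_of_isUnit_sub W ha hu)
  have hnb : ¬IsUnit (⟨m, hm⟩ : W) := fun hu => hmi (inv_mem_of_isUnit_sub W hm hu)
  have h1 : (1 : W) ∈ IsLocalRing.maximalIdeal W := by
    have := (IsLocalRing.maximalIdeal W).sub_mem
      ((IsLocalRing.mem_maximalIdeal _).mpr hna) ((IsLocalRing.mem_maximalIdeal _).mpr hnb)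
    convert this using 1
    ext
    show (1 : F) = (1 + m) - m
    ring
  exact (IsLocalRing.mem_maximalIdeal _).mp h1 isUnit_one

theorem inv_alg_mem {R : Subring (RatFunc K)} (hR : IsKFunctionRing R)
    (W : ValuationSubring (RatFunc K)) (hRW : (R : Set (RatFunc K)) ⊆ W) :
    ∀ (i : ℕ) (f : K[X]), (∀ j, algebraMap K (RatFunc K) (f.coeff j) ∈ W) →
      f.coeff i ≠ 0 → (algebraMap K (RatFunc K) (f.coeff i))⁻¹ ∈ W →
      (algebraMap K[X] (RatFunc K) f)⁻¹ ∈ W := by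
  obtain ⟨hXR, hXiR, hax⟩ := hR
  have hXW : RatFunc.X ∈ W := hRW hXR
  have hXiW : (RatFunc.X : RatFunc K)⁻¹ ∈ W := hRW hXiR
  have hXne : (RatFunc.X : RatFunc K) ≠ 0 := RatFunc.X_ne_zero
  have hmemW : ∀ f : K[X], (∀ j, algebraMap K (RatFunc K) (f.coeff j) ∈ W) →
      algebraMap K[X] (RatFunc K) f ∈ W := fun f hf =>
    alg_mem_of_coeff_mem W.toSubring hXW f hf
  have base : ∀ f : K[X], f.coeff 0 ≠ 0 → (algebraMap K (RatFunc K) (f.coeff 0))⁻¹ ∈ W →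
      (algebraMap K[X] (RatFunc K) f)⁻¹ ∈ W := by
    intro f h0 h0i
    have hf : f ≠ 0 := fun h => h0 (by simp [h])
    obtain ⟨r, hrR, he⟩ := hax f hf
    have hc : algebraMap K (RatFunc K) (f.coeff 0) ≠ 0 :=
      (map_ne_zero_iff _ (algebraMap K (RatFunc K)).injective).mpr h0
    have : algebraMap K[X] (RatFunc K) f * ((algebraMap K (RatFunc K) (f.coeff 0))⁻¹ * r)
        = 1 := by
      rw [← mul_assoc, mul_comm (algebraMap K[X] (RatFunc K) f), mul_assoc, ← he,
        inv_mul_cancel₀ hc]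
    rw [inv_eq_of_mul_eq_one_right this]
    exact mul_mem h0i (hRW hrR)
  intro i
  induction i with
  | zero => intro f _ h0 h0i; exact base f h0 h0i
  | succ i ih =>
    intro f hc hi hii
    have hdc : ∀ j, f.divX.coeff j = f.coeff (j + 1) := fun j => f.coeff_divX
    have hdco : ∀ j, algebraMap K (RatFunc K) (f.divX.coeff j) ∈ W := fun j =>
      (hdc j) ▸ hc (j + 1)
    have hdi : f.divX.coeff i ≠ 0 := (hdc i) ▸ hi
    have hdii : (algebraMap K (RatFunc K) (f.divX.coeff i))⁻¹ ∈ W := (hdc i) ▸ hii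
    have hF₁i : (algebraMap K[X] (RatFunc K) f.divX)⁻¹ ∈ W := ih f.divX hdco hdi hdii
    have hF₁W : algebraMap K[X] (RatFunc K) f.divX ∈ W := hmemW f.divX hdco
    have hd0 : f.divX ≠ 0 := fun h => hdi (by simp [h])
    have hF₁ne : algebraMap K[X] (RatFunc K) f.divX ≠ 0 := RatFunc.algebraMap_ne_zero hd0
    have hsplit : algebraMap K[X] (RatFunc K) f
        = algebraMap K[X] (RatFunc K) f.divX * RatFunc.X
          + algebraMap K (RatFunc K) (f.coeff 0) := by
      rw [RatFunc.algebraMap_eq_C, ← RatFunc.algebraMap_C, ← RatFunc.algebraMap_X, ← map_mul,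
        ← map_add, f.divX_mul_X_add]
    by_cases h0 : f.coeff 0 = 0
    · have : algebraMap K[X] (RatFunc K) f
          = algebraMap K[X] (RatFunc K) f.divX * RatFunc.X := by
        rw [hsplit, h0, map_zero, add_zero]
      rw [this, mul_inv]
      exact mul_mem hF₁i hXiW
    · by_cases h0i : (algebraMap K (RatFunc K) (f.coeff 0))⁻¹ ∈ W
      · exact base f h0 h0i
      · set c : RatFunc K := algebraMap K (RatFunc K) (f.coeff 0) with hcdef
        have hcne : c ≠ 0 := (map_ne_zero_iff _ (algebraMap K (RatFunc K)).injective).mpr h0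
        set F₁ : RatFunc K := algebraMap K[X] (RatFunc K) f.divX with hF₁def
        set m : RatFunc K := c * (RatFunc.X : RatFunc K)⁻¹ * F₁⁻¹ with hmdef
        have hmW : m ∈ W := mul_mem (mul_mem (hc 0) hXiW) hF₁i
        have hmne : m ≠ 0 := by
          rw [hmdef]
          exact mul_ne_zero (mul_ne_zero hcne (inv_ne_zero hXne)) (inv_ne_zero hF₁ne)
        have hmi : m⁻¹ ∉ W := by
          intro hmem
          apply h0i
          have : c⁻¹ = m⁻¹ * (RatFunc.X : RatFunc K)⁻¹ * F₁⁻¹ := by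
            rw [hmdef]
            field_simp
          rw [this]
          exact mul_mem (mul_mem hmem hXiW) hF₁i
        have hone := inv_one_add_mem W hmW hmi
        have hXF : algebraMap K[X] (RatFunc K) f = RatFunc.X * F₁ * (1 + m) := by
          have e : RatFunc.X * F₁ * (1 + m) = F₁ * RatFunc.X + c := by
            rw [hmdef]
            field_simp
          rw [hsplit, e]
        rw [hXF, mul_inv, mul_inv]
        exact mul_mem (mul_mem hXiW hF₁i) hone

theorem exists_min_coeff (V : ValuationSubring K) (f : K[X]) (hf : f ≠ 0) :
    ∃ i, f.coeff i ≠ 0 ∧ ∀ j, f.coeff j * (f.coeff i)⁻¹ ∈ V := by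
  have key : ∀ s : Finset ℕ, s.Nonempty → (∀ i ∈ s, f.coeff i ≠ 0) →
      ∃ i ∈ s, ∀ j ∈ s, f.coeff j * (f.coeff i)⁻¹ ∈ V := by
    intro s
    induction s using Finset.induction_on with
    | empty => intro h; exact absurd h (by simp)
    | @insert a s ha ih =>
      intro _ hne
      by_cases hs : s.Nonempty
      · obtain ⟨i, his, hmin⟩ := ih hs (fun j hj => hne j (Finset.mem_insert_of_mem hj))
        have hane : f.coeff a ≠ 0 := hne a (Finset.mem_insert_self a s)
        have hine : f.coeff i ≠ 0 := hne i (Finset.mem_insert_of_mem his)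
        rcases V.mem_or_inv_mem (f.coeff a * (f.coeff i)⁻¹) with hm | hm
        · refine ⟨i, Finset.mem_insert_of_mem his, fun j hj => ?_⟩
          rcases Finset.mem_insert.mp hj with rfl | hjs
          · exact hm
          · exact hmin j hjs
        · rw [mul_inv, inv_inv] at hm
          refine ⟨a, Finset.mem_insert_self a s, fun j hj => ?_⟩
          rcases Finset.mem_insert.mp hj with rfl | hjs
          · rw [mul_inv_cancel₀ hane]; exact V.one_mem
          · have hv := V.mul_mem _ _ (hmin j hjs) hm
            have e : f.coeff j * (f.coeff a)⁻¹
                = f.coeff j * (f.coeff i)⁻¹ * ((f.coeff a)⁻¹ * f.coeff i) := by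
              field_simp
            rw [e]
            exact hv
      · rw [Finset.not_nonempty_iff_eq_empty] at hs
        subst hs
        refine ⟨a, Finset.mem_insert_self a ∅, fun j hj => ?_⟩
        rcases Finset.mem_insert.mp hj with rfl | hjs
        · rw [mul_inv_cancel₀ (hne j (Finset.mem_insert_self j ∅))]; exact V.one_mem
        · simp at hjs
  obtain ⟨i, his, hmin⟩ := key f.support (Polynomial.nonempty_support_iff.mpr hf)
    (fun i hi => Polynomial.mem_support_iff.mp hi)
  refine ⟨i, Polynomial.mem_support_iff.mp his, fun j => ?_⟩
  by_cases hj : j ∈ f.support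
  · exact hmin j hj
  · rw [Polynomial.notMem_support_iff.mp hj, zero_mul]; exact V.zero_mem

theorem X_mem_trivialExt (V : ValuationSubring K) : (RatFunc.X : RatFunc K) ∈ trivialExtSet V := by
  refine ⟨Polynomial.X, 1, fun i => ?_, fun i => ?_, ⟨0, by simp, by simp [V.one_mem]⟩, ?_⟩
  · rw [Polynomial.coeff_X]
    split <;> simp [V.one_mem, V.zero_mem]
  · rw [Polynomial.coeff_one]
    split <;> simp [V.one_mem, V.zero_mem]
  · rw [map_one, RatFunc.algebraMap_X, div_one]

theorem X_inv_mem_trivialExt (V : ValuationSubring K) :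
    (RatFunc.X : RatFunc K)⁻¹ ∈ trivialExtSet V := by
  refine ⟨1, Polynomial.X, fun i => ?_, fun i => ?_, ⟨1, by simp, by simp [V.one_mem]⟩, ?_⟩
  · rw [Polynomial.coeff_one]
    split <;> simp [V.one_mem, V.zero_mem]
  · rw [Polynomial.coeff_X]
    split <;> simp [V.one_mem, V.zero_mem]
  · rw [map_one, RatFunc.algebraMap_X, one_div]

theorem ratio_mem_trivialExt (V : ValuationSubring K) (f : K[X]) (hf : f ≠ 0) :
    algebraMap K (RatFunc K) (f.coeff 0) * (algebraMap K[X] (RatFunc K) f)⁻¹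
      ∈ trivialExtSet V := by
  obtain ⟨i, hi0, himin⟩ := exists_min_coeff V f hf
  have hci : (f.coeff i)⁻¹ ≠ 0 := inv_ne_zero hi0
  refine ⟨Polynomial.C ((f.coeff i)⁻¹ * f.coeff 0), Polynomial.C (f.coeff i)⁻¹ * f,
    fun j => ?_, fun j => ?_, ⟨i, ?_, ?_⟩, ?_⟩
  · rw [Polynomial.coeff_C]
    split
    · rw [mul_comm]; exact himin 0
    · exact V.zero_mem
  · rw [Polynomial.coeff_C_mul, mul_comm]
    exact himin j
  · rw [Polynomial.coeff_C_mul, inv_mul_cancel₀ hi0]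
    exact one_ne_zero
  · rw [Polynomial.coeff_C_mul, inv_mul_cancel₀ hi0, inv_one]
    exact V.one_mem
  · have h1 : algebraMap K (RatFunc K) ((f.coeff i)⁻¹) ≠ 0 :=
      (map_ne_zero_iff _ (algebraMap K (RatFunc K)).injective).mpr hci
    have h2 : algebraMap K[X] (RatFunc K) f ≠ 0 := RatFunc.algebraMap_ne_zero hf
    have h3 : RatFunc.C (f.coeff i) ≠ 0 :=
      (map_ne_zero_iff _ (RingHom.injective (RatFunc.C : K →+* RatFunc K))).mpr hi0
    simp only [Polynomial.C_mul, map_mul, RatFunc.algebraMap_C,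
      RatFunc.algebraMap_eq_C] at *
    field_simp
    rw [one_div, mul_div_cancel_right₀ _ h1]

theorem trivialExt_eq {R : Subring (RatFunc K)} (hR : IsKFunctionRing R)
    (W : ValuationSubring (RatFunc K)) (hRW : (R : Set (RatFunc K)) ⊆ W) :
    (W : Set (RatFunc K)) = trivialExtSet (W.comap (algebraMap K (RatFunc K))) := by
  set V := W.comap (algebraMap K (RatFunc K)) with hVdef
  have hVmem : ∀ a : K, a ∈ V ↔ algebraMap K (RatFunc K) a ∈ W := fun a =>
    ValuationSubring.mem_comap
  have hXW : RatFunc.X ∈ W := hRW hR.1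
  ext h
  constructor
  · intro hh
    have hhW : h ∈ W := hh
    by_cases h0 : h = 0
    · refine ⟨0, 1, fun i => by simp [V.zero_mem], fun i => ?_,
        ⟨0, by simp, by simp [V.one_mem]⟩, by simp [h0]⟩
      rw [Polynomial.coeff_one]
      split <;> simp [V.one_mem, V.zero_mem]
    · set p := h.num with hpdef
      set q := h.denom with hqdef
      have hq : q ≠ 0 := h.denom_ne_zero
      have hp : p ≠ 0 := RatFunc.num_ne_zero h0
      have hpq : h = algebraMap K[X] (RatFunc K) p / algebraMap K[X] (RatFunc K) q :=
        (RatFunc.num_div_denom h).symm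
      have hpne : algebraMap K[X] (RatFunc K) p ≠ 0 := RatFunc.algebraMap_ne_zero hp
      have hqne : algebraMap K[X] (RatFunc K) q ≠ 0 := RatFunc.algebraMap_ne_zero hq
      obtain ⟨ip, hip0, hipmin⟩ := exists_min_coeff V p hp
      obtain ⟨iq, hiq0, hiqmin⟩ := exists_min_coeff V q hq
      set c := q.coeff iq with hcdef
      set d := p.coeff ip with hddef
      set p₁ := Polynomial.C d⁻¹ * p with hp₁def
      set g₁ := Polynomial.C c⁻¹ * q with hg₁def
      -- coefficients of p₁ and g₁ lie in V
      have hp₁co : ∀ j, p₁.coeff j ∈ V := fun j => by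
        rw [hp₁def, Polynomial.coeff_C_mul, mul_comm]; exact hipmin j
      have hg₁co : ∀ j, g₁.coeff j ∈ V := fun j => by
        rw [hg₁def, Polynomial.coeff_C_mul, mul_comm]; exact hiqmin j
      have hp₁ip : p₁.coeff ip = 1 := by
        rw [hp₁def, Polynomial.coeff_C_mul, ← hddef, inv_mul_cancel₀ hip0]
      have hg₁iq : g₁.coeff iq = 1 := by
        rw [hg₁def, Polynomial.coeff_C_mul, ← hcdef, inv_mul_cancel₀ hiq0]
      -- p₁ and g₁ are units of W
      have hp₁inv : (algebraMap K[X] (RatFunc K) p₁)⁻¹ ∈ W :=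
        inv_alg_mem hR W hRW ip p₁ (fun j => (hVmem _).mp (hp₁co j))
          (by rw [hp₁ip]; exact one_ne_zero) (by rw [hp₁ip, map_one, inv_one]; exact W.one_mem)
      have hg₁W : algebraMap K[X] (RatFunc K) g₁ ∈ W :=
        alg_mem_of_coeff_mem W.toSubring hXW g₁ (fun j => (hVmem _).mp (hg₁co j))
      -- the element d/c belongs to W
      have hdc : algebraMap K (RatFunc K) d * (algebraMap K (RatFunc K) c)⁻¹ ∈ W := by
        have hcne : algebraMap K (RatFunc K) c ≠ 0 :=
          (map_ne_zero_iff _ (algebraMap K (RatFunc K)).injective).mpr hiq0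
        have hdne : algebraMap K (RatFunc K) d ≠ 0 :=
          (map_ne_zero_iff _ (algebraMap K (RatFunc K)).injective).mpr hip0
        have halgp₁ : algebraMap K[X] (RatFunc K) p₁
            = algebraMap K (RatFunc K) d⁻¹ * algebraMap K[X] (RatFunc K) p := by
          rw [hp₁def, map_mul, RatFunc.algebraMap_C, RatFunc.algebraMap_eq_C]
        have halgg₁ : algebraMap K[X] (RatFunc K) g₁
            = algebraMap K (RatFunc K) c⁻¹ * algebraMap K[X] (RatFunc K) q := by
          rw [hg₁def, map_mul, RatFunc.algebraMap_C, RatFunc.algebraMap_eq_C]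
        have key : algebraMap K (RatFunc K) d * (algebraMap K (RatFunc K) c)⁻¹
            = h * (algebraMap K[X] (RatFunc K) p₁)⁻¹ * algebraMap K[X] (RatFunc K) g₁ := by
          have hCc0 : (RatFunc.C c : RatFunc K) ≠ 0 :=
            (map_ne_zero_iff _ (RingHom.injective (RatFunc.C : K →+* RatFunc K))).mpr hiq0
          have hCd0 : (RatFunc.C d : RatFunc K) ≠ 0 :=
            (map_ne_zero_iff _ (RingHom.injective (RatFunc.C : K →+* RatFunc K))).mpr hip0
          rw [hpq, halgp₁, halgg₁, map_inv₀, map_inv₀]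
          simp only [RatFunc.algebraMap_eq_C]
          field_simp
        rw [key]
        exact mul_mem (mul_mem hhW hp₁inv) hg₁W
      -- now exhibit h as a ratio of polynomials with coefficients in V
      refine ⟨Polynomial.C c⁻¹ * p, g₁, fun j => ?_, hg₁co, ⟨iq, by rw [hg₁iq]; exact one_ne_zero,
        by rw [hg₁iq, inv_one]; exact V.one_mem⟩, ?_⟩
      · rw [Polynomial.coeff_C_mul]
        have e : c⁻¹ * p.coeff j = (p.coeff j * d⁻¹) * (d * c⁻¹) := by
          field_simp
        rw [e]
        refine V.mul_mem _ _ (hipmin j) ?_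
        rw [hVmem, map_mul, map_inv₀]
        exact hdc
      · have hCcne : (RatFunc.C c⁻¹ : RatFunc K) ≠ 0 := by
          rw [Ne, map_eq_zero_iff _ (RingHom.injective (RatFunc.C : K →+* RatFunc K))]
          exact inv_ne_zero hiq0
        rw [hg₁def, map_mul, map_mul, RatFunc.algebraMap_C, mul_div_mul_left _ _ hCcne]
        exact hpq
  · rintro ⟨f, g, hf, hg, ⟨i, hgi0, hgiV⟩, rfl⟩
    have hfW : algebraMap K[X] (RatFunc K) f ∈ W :=
      alg_mem_of_coeff_mem W.toSubring hXW f (fun j => (hVmem _).mp (hf j))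
    have hginv : (algebraMap K[X] (RatFunc K) g)⁻¹ ∈ W := by
      refine inv_alg_mem hR W hRW i g (fun j => (hVmem _).mp (hg j)) hgi0 ?_
      rw [← map_inv₀]
      exact (hVmem _).mp hgiV
    rw [div_eq_mul_inv]
    exact mul_mem hfW hginv



end Auxiliary

/-- A subring `R` of `K(T)` is a `K`-function ring if and only if `R` is integrally closed
in `K(T)` and every valuation overring of `R` in `K(T)` is the trivial extension `V(T)`
of some valuation domain `V` of `K`. -/
theorem isKFunctionRing_iff {K : Type*} [Field K] (R : Subring (RatFunc K)) :
    IsKFunctionRing R ↔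
      ((∀ x : RatFunc K, R.subtype.IsIntegralElem x → x ∈ R) ∧
        ∀ W : ValuationSubring (RatFunc K), (R : Set (RatFunc K)) ⊆ W →
          ∃ V : ValuationSubring K, (W : Set (RatFunc K)) = trivialExtSet V) := by
  constructor
  · intro hR
    exact ⟨fun x hx => kfr_integrally_closed hR x hx,
      fun W hRW => ⟨W.comap (algebraMap K (RatFunc K)), trivialExt_eq hR W hRW⟩⟩
  · rintro ⟨hIC, hVal⟩
    have hmem : ∀ x : RatFunc K, (∀ V : ValuationSubring K, x ∈ trivialExtSet V) → x ∈ R := by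
      intro x hx
      refine hIC x (isIntegralElem_of_forall_valuationSubring R x ?_)
      intro W hRW
      obtain ⟨V, hV⟩ := hVal W hRW
      have : x ∈ (W : Set (RatFunc K)) := hV ▸ hx V
      exact this
    refine ⟨hmem _ (fun V => X_mem_trivialExt V), hmem _ (fun V => X_inv_mem_trivialExt V), ?_⟩
    intro f hf
    have hfne : algebraMap K[X] (RatFunc K) f ≠ 0 := RatFunc.algebraMap_ne_zero hf
    refine ⟨algebraMap K (RatFunc K) (f.coeff 0) * (algebraMap K[X] (RatFunc K) f)⁻¹,
      hmem _ (fun V => ratio_mem_trivialExt V f hf), ?_⟩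
    field_simp
end

section
/- Let K be a field, A a subring of K, Y a nonempty subset of Zar(K|A), and 𝒰 an ultrafilter on Y. Then A_{Y,𝒰} := {x ∈ K | {V ∈ Y | x ∈ V} ∈ 𝒰} is a valuation domain of K containing A. -/
/-- Let `K` be a field, `A` a subring of `K`, `Y` a nonempty subset of `Zar(K|A)` and
`𝒰` an ultrafilter on `Y`. Then `A_{Y,𝒰} := {x ∈ K | B_x ∩ Y ∈ 𝒰}` is a valuation
domain of `K` containing `A`. -/
theorem ultrafilter_limit_valuation {K : Type*} [Field K] (A : Subring K)
    (Y : Set (ValuationSubring K)) (hY : ∀ V ∈ Y, (A : Set K) ⊆ ↑V)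
    (hne : Y.Nonempty) (𝒰 : Ultrafilter Y) :
    ∃ V : ValuationSubring K,
      (V : Set K) = {x : K | {v : Y | x ∈ (v : ValuationSubring K)} ∈ 𝒰} ∧
      (A : Set K) ⊆ ↑V := by
  set S : Set K := {x : K | {v : Y | x ∈ (v : ValuationSubring K)} ∈ 𝒰} with hS
  have huniv : ∀ x : K, (∀ v : Y, x ∈ (v : ValuationSubring K)) → x ∈ S := by
    intro x hx
    have : {v : Y | x ∈ (v : ValuationSubring K)} = Set.univ := by
      ext v; simp [hx v]
    rw [hS, Set.mem_setOf_eq, this]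
    exact Filter.univ_mem
  have hbin : ∀ x y : K, x ∈ S → y ∈ S →
      ∀ z : K, (∀ v : ValuationSubring K, x ∈ v → y ∈ v → z ∈ v) → z ∈ S := by
    intro x y hx hy z hz
    refine 𝒰.mem_of_superset (𝒰.inter_mem hx hy) ?_
    rintro v ⟨hvx, hvy⟩
    exact hz _ hvx hvy
  let hSub : Subring K :=
    { carrier := S
      one_mem' := huniv 1 (fun v => one_mem _)
      zero_mem' := huniv 0 (fun v => zero_mem _)
      add_mem' := fun {a b} ha hb => hbin a b ha hb (a + b) (fun v h1 h2 => add_mem h1 h2)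
      mul_mem' := fun {a b} ha hb => hbin a b ha hb (a * b) (fun v h1 h2 => mul_mem h1 h2)
      neg_mem' := fun {a} ha => hbin a a ha ha (-a) (fun v h1 _ => neg_mem h1) }
  refine ⟨⟨hSub, ?_⟩, rfl, ?_⟩
  · intro x
    have : {v : Y | x ∈ (v : ValuationSubring K)} ∪ {v : Y | x⁻¹ ∈ (v : ValuationSubring K)}
        = Set.univ := by
      ext v
      simp only [Set.mem_union, Set.mem_setOf_eq, Set.mem_univ, iff_true]
      exact (v : ValuationSubring K).mem_or_inv_mem x
    have h2 : {v : Y | x ∈ (v : ValuationSubring K)} ∪ {v : Y | x⁻¹ ∈ (v : ValuationSubring K)} ∈ 𝒰 := by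
      rw [this]; exact Filter.univ_mem
    exact Ultrafilter.union_mem_iff.mp h2
  · intro a ha
    exact huniv a (fun v => hY v v.2 ha)
end

section
/- Let K be a field, A a subring of K, and Y', Y'' subsets of Zar(K|A) whose closures in the constructible topology of Zar(K|A) coincide. Then ⋂{V | V ∈ Y'} = ⋂{V | V ∈ Y''}. In particular, for any Y ⊆ Zar(K|A), ⋂{V | V ∈ Y} = ⋂{W | W ∈ Cl^cons(Y)}. -/
open Set

namespace ZarAuxProof

variable {K : Type*} [Field K]

/-- The set of boolean-valued functions describing valuation subrings containing `s`. -/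
def goodFun (s : Set K) : Set (K → Bool) :=
  {f | (∀ a ∈ s, f a = true) ∧ f 1 = true ∧
    (∀ a b : K, f a = true → f b = true → f (a + b) = true) ∧
    (∀ a b : K, f a = true → f b = true → f (a * b) = true) ∧
    (∀ a : K, f a = true → f (-a) = true) ∧
    (∀ a : K, f a = true ∨ f a⁻¹ = true)}

lemma isClopen_eval (a : K) : IsClopen {f : K → Bool | f a = true} := by
  have h : {f : K → Bool | f a = true} = (fun f : K → Bool => f a) ⁻¹' {true} := by
    ext f; simp
  rw [h]
  exact (isClopen_discrete _).preimage (continuous_apply a)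

lemma isClosed_goodFun (s : Set K) : IsClosed (goodFun s) := by
  have h1 : goodFun s =
      (⋂ a ∈ s, {f : K → Bool | f a = true}) ∩ {f : K → Bool | f 1 = true} ∩
      (⋂ a : K, ⋂ b : K,
        (({f : K → Bool | f a = true} ∩ {f : K → Bool | f b = true})ᶜ ∪
          {f : K → Bool | f (a + b) = true})) ∩
      (⋂ a : K, ⋂ b : K,
        (({f : K → Bool | f a = true} ∩ {f : K → Bool | f b = true})ᶜ ∪
          {f : K → Bool | f (a * b) = true})) ∩
      (⋂ a : K, ({f : K → Bool | f a = true}ᶜ ∪ {f : K → Bool | f (-a) = true})) ∩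
      (⋂ a : K, ({f : K → Bool | f a = true} ∪ {f : K → Bool | f a⁻¹ = true})) := by
    ext f
    simp only [goodFun, mem_setOf_eq, mem_inter_iff, mem_iInter, mem_union, mem_compl_iff,
      not_and]
    constructor
    · rintro ⟨h1, h2, h3, h4, h5, h6⟩
      refine ⟨⟨⟨⟨⟨h1, h2⟩, fun a b => ?_⟩, fun a b => ?_⟩, fun a => ?_⟩, h6⟩
      · by_cases ha : f a = true
        · by_cases hb : f b = true
          · exact Or.inr (h3 a b ha hb)
          · exact Or.inl fun _ => hb
        · exact Or.inl fun h => absurd h ha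
      · by_cases ha : f a = true
        · by_cases hb : f b = true
          · exact Or.inr (h4 a b ha hb)
          · exact Or.inl fun _ => hb
        · exact Or.inl fun h => absurd h ha
      · by_cases ha : f a = true
        · exact Or.inr (h5 a ha)
        · exact Or.inl ha
    · rintro ⟨⟨⟨⟨⟨h1, h2⟩, h3⟩, h4⟩, h5⟩, h6⟩
      refine ⟨h1, h2, fun a b ha hb => ?_, fun a b ha hb => ?_, fun a ha => ?_, h6⟩
      · rcases h3 a b with h | h
        · exact absurd hb (h ha)
        · exact h
      · rcases h4 a b with h | h
        · exact absurd hb (h ha)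
        · exact h
      · rcases h5 a with h | h
        · exact absurd ha h
        · exact h
  rw [h1]
  refine (((((isClosed_biInter fun a _ => (isClopen_eval a).isClosed).inter
    (isClopen_eval 1).isClosed).inter
    (isClosed_iInter fun a => isClosed_iInter fun b =>
      (((isClopen_eval a).isOpen.inter (isClopen_eval b).isOpen).isClosed_compl).union
        (isClopen_eval (a + b)).isClosed)).inter
    (isClosed_iInter fun a => isClosed_iInter fun b =>
      (((isClopen_eval a).isOpen.inter (isClopen_eval b).isOpen).isClosed_compl).union
        (isClopen_eval (a * b)).isClosed)).inter
    (isClosed_iInter fun a =>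
      ((isClopen_eval a).isOpen.isClosed_compl).union (isClopen_eval (-a)).isClosed)).inter
    (isClosed_iInter fun a =>
      ((isClopen_eval a).isClosed).union (isClopen_eval a⁻¹).isClosed)

/-- Build a valuation subring from a good boolean function. -/
def toVSR {s : Set K} (f : K → Bool) (hf : f ∈ goodFun s) : ValuationSubring K where
  carrier := {k | f k = true}
  one_mem' := hf.2.1
  mul_mem' := fun ha hb => hf.2.2.2.1 _ _ ha hb
  add_mem' := fun ha hb => hf.2.2.1 _ _ ha hb
  zero_mem' := by
    have h := hf.2.2.1 1 (-1) hf.2.1 (hf.2.2.2.2.1 1 hf.2.1)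
    simpa using h
  neg_mem' := fun ha => hf.2.2.2.2.1 _ ha
  mem_or_inv_mem' := fun x => hf.2.2.2.2.2 x

lemma mem_toVSR {s : Set K} {f : K → Bool} {hf : f ∈ goodFun s} {k : K} :
    k ∈ toVSR f hf ↔ f k = true := Iff.rfl

/-- The basic sets `{V | s ⊆ V}` are compact in the Zariski topology. -/
lemma isCompact_basicSet (s : Set K) :
    @IsCompact _ (zarTop K) {V : ValuationSubring K | s ⊆ ↑V} := by
  classical
  letI : TopologicalSpace (ValuationSubring K) := zarTop K
  have hC : IsCompact (goodFun s) := (isClosed_goodFun s).isCompact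
  haveI : CompactSpace (goodFun s) := isCompact_iff_compactSpace.mp hC
  let ψ : goodFun s → ValuationSubring K := fun f => toVSR f.1 f.2
  have hcont : Continuous ψ := by
    show @Continuous _ _ _ (zarTop K) ψ
    rw [zarTop, continuous_generateFrom_iff]
    rintro S ⟨F, rfl⟩
    have hpre : ψ ⁻¹' {V : ValuationSubring K | ∀ x ∈ F, x ∈ V} =
        ⋂ x ∈ F, {f : goodFun s | f.1 x = true} := by
      ext f
      simp only [mem_preimage, mem_setOf_eq, mem_iInter]
      constructor
      · intro h x hx; exact h x hx
      · intro h x hx; exact h x hx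
    rw [hpre]
    exact isOpen_biInter_finset fun x _ =>
      ((isClopen_discrete {true}).preimage
        ((continuous_apply x).comp continuous_subtype_val)).isOpen
  have hrange : Set.range ψ = {V : ValuationSubring K | s ⊆ ↑V} := by
    ext V
    constructor
    · rintro ⟨f, rfl⟩
      intro a ha
      exact f.2.1 a ha
    · intro hV
      have hmem : (fun k => decide (k ∈ V)) ∈ goodFun s := by
        refine ⟨fun a ha => by simpa using hV ha, by simpa using one_mem V, ?_, ?_, ?_, ?_⟩
        · intro a b ha hb
          simp only [decide_eq_true_eq] at *
          exact V.add_mem _ _ ha hb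
        · intro a b ha hb
          simp only [decide_eq_true_eq] at *
          exact V.mul_mem _ _ ha hb
        · intro a ha
          simp only [decide_eq_true_eq] at *
          exact V.neg_mem _ ha
        · intro a
          simp only [decide_eq_true_eq]
          exact V.mem_or_inv_mem a
      refine ⟨⟨_, hmem⟩, ?_⟩
      ext k
      simp [ψ, mem_toVSR]
  rw [← hrange]
  exact isCompact_range hcont

abbrev zsub (A : Subring K) : TopologicalSpace {V : ValuationSubring K // (A : Set K) ⊆ ↑V} :=
  @instTopologicalSpaceSubtype _ _ (zarTop K)

lemma key_clopen (A : Subring K) (x : K) :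
    @IsOpen _ (zsub A) {V : {V : ValuationSubring K // (A : Set K) ⊆ ↑V} |
        x ∈ (V : ValuationSubring K)} ∧
    @IsCompact _ (zsub A) {V : {V : ValuationSubring K // (A : Set K) ⊆ ↑V} |
        x ∈ (V : ValuationSubring K)} := by
  letI : TopologicalSpace (ValuationSubring K) := zarTop K
  constructor
  · have hgen : IsOpen {V : ValuationSubring K | x ∈ V} := by
      have hmem : {V : ValuationSubring K | x ∈ V} ∈
          {S : Set (ValuationSubring K) |
            ∃ F : Finset K, S = {V : ValuationSubring K | ∀ y ∈ F, y ∈ V}} :=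
        ⟨{x}, by ext V; simp⟩
      exact TopologicalSpace.isOpen_generateFrom_of_mem hmem
    exact hgen.preimage continuous_subtype_val
  · show IsCompact {V : {V : ValuationSubring K // (A : Set K) ⊆ ↑V} |
        x ∈ (V : ValuationSubring K)}
    rw [Topology.IsEmbedding.subtypeVal.isCompact_iff]
    have himg : (Subtype.val '' {V : {V : ValuationSubring K // (A : Set K) ⊆ ↑V} |
        x ∈ (V : ValuationSubring K)}) =
        {V : ValuationSubring K | ((A : Set K) ∪ {x}) ⊆ ↑V} := by
      ext V
      constructor
      · rintro ⟨⟨W, hW⟩, hx, rfl⟩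
        exact union_subset hW (by simpa using hx)
      · intro hV
        exact ⟨⟨V, (union_subset_iff.mp hV).1⟩, by simpa using (union_subset_iff.mp hV).2, rfl⟩
    rw [himg]
    exact isCompact_basicSet _

lemma inter_eq_inter_closure (A : Subring K)
    (Y : Set {V : ValuationSubring K // (A : Set K) ⊆ ↑V}) :
    ⋂ V ∈ Y, ((V : ValuationSubring K) : Set K) =
      ⋂ W ∈ @closure _ (@constructibleTop _ (zsub A)) Y,
        ((W : ValuationSubring K) : Set K) := by
  apply Set.Subset.antisymm
  · intro x hx
    simp only [Set.mem_iInter] at hx ⊢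
    intro W hW
    have hopen : @IsOpen _ (@constructibleTop _ (zsub A))
        ({V : {V : ValuationSubring K // (A : Set K) ⊆ ↑V} |
          x ∈ (V : ValuationSubring K)}ᶜ) :=
      TopologicalSpace.isOpen_generateFrom_of_mem
        (Or.inr ⟨_, ⟨(key_clopen A x).1, (key_clopen A x).2⟩, rfl⟩)
    have hclosed : @IsClosed _ (@constructibleTop _ (zsub A))
        {V : {V : ValuationSubring K // (A : Set K) ⊆ ↑V} |
          x ∈ (V : ValuationSubring K)} :=
      @IsClosed.mk _ (@constructibleTop _ (zsub A)) _ hopen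
    have hYsub : Y ⊆ {V : {V : ValuationSubring K // (A : Set K) ⊆ ↑V} |
        x ∈ (V : ValuationSubring K)} := fun V hV => hx V hV
    have hsub := @closure_minimal _ (@constructibleTop _ (zsub A)) Y _ hYsub hclosed
    exact hsub hW
  · intro x hx
    simp only [Set.mem_iInter] at hx ⊢
    intro V hV
    have hsub : Y ⊆ @closure _ (@constructibleTop _ (zsub A)) Y :=
      @subset_closure _ (@constructibleTop _ (zsub A)) Y
    exact hx V (hsub hV)

end ZarAuxProof

/-- If two subsets `Y'`, `Y''` of `Zar(K|A)` have the same closure in the constructible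
topology, then they represent the same ring: `⋂{V | V ∈ Y'} = ⋂{V | V ∈ Y''}`.
In particular, any `Y ⊆ Zar(K|A)` and its constructible closure have the same
intersection. -/
theorem same_cons_closure_same_intersection {K : Type*} [Field K] (A : Subring K) :
    letI : TopologicalSpace (ValuationSubring K) := zarTop K
    ∀ Y' Y'' : Set {V : ValuationSubring K // (A : Set K) ⊆ ↑V},
      (@closure _ (constructibleTop {V : ValuationSubring K // (A : Set K) ⊆ ↑V}) Y' =
          @closure _ (constructibleTop {V : ValuationSubring K // (A : Set K) ⊆ ↑V}) Y'' →
        ⋂ V ∈ Y', ((V : ValuationSubring K) : Set K) =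
          ⋂ V ∈ Y'', ((V : ValuationSubring K) : Set K)) ∧
      ⋂ V ∈ Y', ((V : ValuationSubring K) : Set K) =
        ⋂ W ∈ @closure _ (constructibleTop {V : ValuationSubring K // (A : Set K) ⊆ ↑V}) Y',
          ((W : ValuationSubring K) : Set K) := by
  intro Y' Y''
  have e' := ZarAuxProof.inter_eq_inter_closure A Y'
  have e'' := ZarAuxProof.inter_eq_inter_closure A Y''
  refine ⟨fun h => ?_, e'⟩
  have h' : @closure _ (@constructibleTop _ (ZarAuxProof.zsub A)) Y' =
      @closure _ (@constructibleTop _ (ZarAuxProof.zsub A)) Y'' := h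
  calc ⋂ V ∈ Y', ((V : ValuationSubring K) : Set K)
      = ⋂ W ∈ @closure _ (@constructibleTop _ (ZarAuxProof.zsub A)) Y',
          ((W : ValuationSubring K) : Set K) := e'
    _ = ⋂ W ∈ @closure _ (@constructibleTop _ (ZarAuxProof.zsub A)) Y'',
          ((W : ValuationSubring K) : Set K) := by rw [h']
    _ = ⋂ V ∈ Y'', ((V : ValuationSubring K) : Set K) := e''.symm
end
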